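/- arXiv:1401.3087 — 4 statements merged into one kernel-verified Lean document; each statement's English description precedes it below -/
import Mathlib

section
/- For every d ∈ ℕ, β ∈ (ℝ₊)^d and α ∈ ℝ^d with max_{j} (α_j/β_j) > 0, there exist constants c₁, c₂ > 0 (depending only on d, α, β) such that for all r ∈ ℕ, c₁ · 2^{M r} · r^{N-1} ≤ ∑_{κ ∈ ℤ₊^d, (κ,β) ≤ r} 2^{(κ,α)} ≤ c₂ · 2^{M r} · r^{N-1}, where M = max_j (α_j/β_j) and N = card{j : α_j/β_j = M}. -/
set_option maxHeartbeats 1000000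

open scoped Classical

private lemma sum_upd {d : ℕ} (w : Fin d → ℝ) (ρ : Fin d → ℕ) (j₀ : Fin d) (k : ℕ) :
    ∑ j, ((Function.update ρ j₀ k) j : ℝ) * w j
      = (∑ j, (ρ j : ℝ) * w j) + ((k : ℝ) - (ρ j₀ : ℝ)) * w j₀ := by
  have h : ∀ j ∈ Finset.univ, ((Function.update ρ j₀ k) j : ℝ) * w j - (ρ j : ℝ) * w j
      = if j = j₀ then ((k : ℝ) - (ρ j₀ : ℝ)) * w j₀ else 0 := by
    intro j _
    by_cases hj : j = j₀
    · subst hj; simp [sub_mul]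
    · simp [Function.update_of_ne hj, hj]
  have h2 := Finset.sum_congr rfl h
  rw [Finset.sum_sub_distrib] at h2
  rw [Finset.sum_ite_eq' Finset.univ j₀ (fun _ => ((k : ℝ) - (ρ j₀ : ℝ)) * w j₀)] at h2
  simp only [Finset.mem_univ, if_true] at h2
  linarith

private lemma rpow_sum_eq' {ι : Type*} (s : Finset ι) (x : ι → ℝ) :
    (2:ℝ) ^ (∑ j ∈ s, x j) = ∏ j ∈ s, (2:ℝ) ^ (x j) := by
  induction s using Finset.cons_induction with
  | empty => simp
  | cons a s ha ih => rw [Finset.sum_cons, Finset.prod_cons, Real.rpow_add two_pos, ih]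

private lemma geom_sum_le_inv (x : ℝ) (h0 : 0 ≤ x) (h1 : x < 1) (nn : ℕ) :
    ∑ k ∈ Finset.range nn, x ^ k ≤ (1 - x)⁻¹ := by
  calc ∑ k ∈ Finset.range nn, x ^ k ≤ ∑' k : ℕ, x ^ k :=
        Summable.sum_le_tsum _ (fun i _ => pow_nonneg h0 i) (summable_geometric_of_lt_one h0 h1)
  _ = (1-x)⁻¹ := tsum_geometric_of_lt_one h0 h1

/-- Lemma 1.2.2: two-sided estimate for the lacunary sum
`∑_{κ ∈ ℤ₊^d, (κ,β) ≤ r} 2^{(κ,α)}`. -/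
theorem stmt_0 (d : ℕ) (hd : 0 < d) (α β : Fin d → ℝ) (hβ : ∀ j, 0 < β j)
    (M : ℝ) (hM : IsGreatest (Set.range fun j => α j / β j) M) (hMpos : 0 < M) :
    ∃ c₁ c₂ : ℝ, 0 < c₁ ∧ 0 < c₂ ∧ ∀ r : ℕ, 1 ≤ r →
      (c₁ * (2 : ℝ) ^ (M * r) *
          (r : ℝ) ^ ((((Finset.univ.filter fun j => α j / β j = M).card : ℝ)) - 1) ≤
        ∑' κ : Fin d → ℕ,
          (if (∑ j, (κ j : ℝ) * β j) ≤ (r : ℝ) then (2 : ℝ) ^ (∑ j, (κ j : ℝ) * α j) else 0)) ∧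
      (∑' κ : Fin d → ℕ,
          (if (∑ j, (κ j : ℝ) * β j) ≤ (r : ℝ) then (2 : ℝ) ^ (∑ j, (κ j : ℝ) * α j) else 0)) ≤
        c₂ * (2 : ℝ) ^ (M * r) *
          (r : ℝ) ^ ((((Finset.univ.filter fun j => α j / β j = M).card : ℝ)) - 1) := by
  obtain ⟨j₀, hj₀⟩ := hM.1
  simp only at hj₀
  have hub : ∀ j, α j / β j ≤ M := fun j => hM.2 ⟨j, rfl⟩
  set T : Finset (Fin d) := Finset.univ.filter (fun j => α j / β j = M) with hT
  have hj₀T : j₀ ∈ T := by simp [hT, hj₀]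
  have hαT : ∀ j ∈ T, α j = M * β j := by
    intro j hj
    have hjm : α j / β j = M := by simpa [hT] using hj
    exact (div_eq_iff (hβ j).ne').mp hjm
  have hαle : ∀ j, α j ≤ M * β j := by
    intro j
    have := (div_le_iff₀ (hβ j)).mp (hub j)
    linarith [this]
  have hεpos : ∀ j, j ∉ T → 0 < M * β j - α j := by
    intro j hj
    have hne : α j / β j ≠ M := by simpa [hT] using hj
    have hlt : α j / β j < M := lt_of_le_of_ne (hub j) hne
    have := (div_lt_iff₀ (hβ j)).mp hlt
    linarith
  have hN : 1 ≤ T.card := Finset.card_pos.mpr ⟨j₀, hj₀T⟩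
  set n : ℕ := T.card - 1 with hn
  have hcastn : ((T.card : ℝ)) - 1 = (n : ℝ) := by
    rw [hn, Nat.cast_sub hN]; norm_num
  have hexp : ∀ r : ℕ, (r : ℝ) ^ (((T.card : ℝ)) - 1) = (r : ℝ) ^ n := by
    intro r
    rw [hcastn, Real.rpow_natCast]
  -- b0 : nat with 1/β j ≤ b0 for all j
  obtain ⟨b0, hb0β⟩ : ∃ b0 : ℕ, ∀ j, 1 ≤ (b0 : ℝ) * β j := by
    refine ⟨⌈∑ i, (β i)⁻¹⌉₊ + 1, fun j => ?_⟩
    have hb0 : (β j)⁻¹ ≤ ((⌈∑ i, (β i)⁻¹⌉₊ + 1 : ℕ) : ℝ) := by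
      calc (β j)⁻¹ ≤ ∑ i, (β i)⁻¹ :=
            Finset.single_le_sum (fun i _ => (inv_nonneg.mpr (hβ i).le)) (Finset.mem_univ j)
      _ ≤ (⌈∑ i, (β i)⁻¹⌉₊ : ℝ) := Nat.le_ceil _
      _ ≤ _ := by push_cast; linarith
    have h2 := mul_le_mul_of_nonneg_right hb0 (hβ j).le
    rwa [inv_mul_cancel₀ (hβ j).ne'] at h2
  -- c0 : nat with β j ≤ c0
  obtain ⟨c0, hc0, hc0pos⟩ : ∃ c0 : ℕ, (∀ j, β j ≤ (c0 : ℝ)) ∧ 0 < c0 := by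
    refine ⟨⌈∑ i, β i⌉₊ + 1, fun j => ?_, Nat.succ_pos _⟩
    calc β j ≤ ∑ i, β i := Finset.single_le_sum (fun i _ => (hβ i).le) (Finset.mem_univ j)
    _ ≤ (⌈∑ i, β i⌉₊ : ℝ) := Nat.le_ceil _
    _ ≤ _ := by push_cast; linarith
  have hdc0 : 0 < d * c0 := Nat.mul_pos hd hc0pos
  have hdc0R : (0:ℝ) < (d : ℝ) * (c0 : ℝ) := by positivity
  -- constants
  set q : ℝ := (2:ℝ) ^ (α j₀) with hq
  have hαj₀ : α j₀ = M * β j₀ := hαT j₀ hj₀T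
  have hαj₀pos : 0 < α j₀ := by rw [hαj₀]; exact mul_pos hMpos (hβ j₀)
  have hq1 : 1 < q := Real.one_lt_rpow_iff_of_pos two_pos |>.mpr (Or.inl ⟨one_lt_two, hαj₀pos⟩)
  set Cq : ℝ := q * (q - 1)⁻¹ with hCq
  have hCqpos : 0 < Cq := mul_pos (lt_trans one_pos hq1) (inv_pos.mpr (by linarith))
  set C₀ : ℝ := ∏ j, (if j ∈ T then 1 else (1 - (2:ℝ) ^ (-(M * β j - α j)))⁻¹) with hC₀
  have hfactpos : ∀ j, j ∉ T → (2:ℝ) ^ (-(M * β j - α j)) < 1 := fun j hj =>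
    Real.rpow_lt_one_of_one_lt_of_neg one_lt_two (by linarith [hεpos j hj])
  have hC₀pos : 0 < C₀ := by
    rw [hC₀]
    apply Finset.prod_pos
    intro j _
    by_cases hj : j ∈ T
    · simp [hj]
    · simp only [hj, if_false]
      exact inv_pos.mpr (by linarith [hfactpos j hj, Real.rpow_nonneg (by norm_num : (0:ℝ) ≤ 2) (-(M * β j - α j))])
  set c₁' : ℝ := (2:ℝ) ^ (-(M * β j₀)) / (2 * ((d : ℝ) * (c0 : ℝ))) ^ n with hc₁'
  have hc₁'pos : 0 < c₁' := by rw [hc₁']; positivity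
  set c₁'' : ℝ := ((2:ℝ) ^ (M * ((d * c0 : ℕ) : ℝ)) * (((d * c0 : ℕ) : ℝ)) ^ n)⁻¹ with hc₁''
  have hc₁''pos : 0 < c₁'' := by
    rw [hc₁'']
    apply inv_pos.mpr
    apply mul_pos (Real.rpow_pos_of_pos two_pos _)
    apply pow_pos
    exact_mod_cast hdc0
  set c₂ : ℝ := Cq * C₀ * ((b0 : ℝ) + 1) ^ n with hc₂def
  have hc₂pos : 0 < c₂ := by rw [hc₂def]; positivity
  refine ⟨min c₁' c₁'', c₂, lt_min hc₁'pos hc₁''pos, hc₂pos, ?_⟩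
  intro r hr
  -- the function
  set F : (Fin d → ℕ) → ℝ := fun κ =>
    if (∑ j, (κ j : ℝ) * β j) ≤ (r : ℝ) then (2 : ℝ) ^ (∑ j, (κ j : ℝ) * α j) else 0 with hF
  have hFnonneg : ∀ κ, 0 ≤ F κ := by
    intro κ
    rw [hF]
    dsimp only
    split
    · exact Real.rpow_nonneg (by norm_num) _
    · exact le_refl 0
  set K : Finset (Fin d → ℕ) := Fintype.piFinset (fun _ : Fin d => Finset.range (r * b0 + 1)) with hK
  have hout : ∀ κ ∉ K, F κ = 0 := by
    intro κ hκ
    rw [hK, Fintype.mem_piFinset] at hκ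
    push_neg at hκ
    obtain ⟨j, hj⟩ := hκ
    rw [Finset.mem_range, not_lt] at hj
    have hbig : (r : ℝ) < ∑ i, (κ i : ℝ) * β i := by
      have h1 : (r : ℝ) ≤ ((r * b0 : ℕ) : ℝ) * β j := by
        rw [Nat.cast_mul]
        calc (r:ℝ) = r * 1 := by ring
        _ ≤ (r : ℝ) * ((b0:ℝ) * β j) :=
            mul_le_mul_of_nonneg_left (hb0β j) (by positivity)
        _ = (r : ℝ) * (b0:ℝ) * β j := by ring
      have h2 : ((r * b0 : ℕ) : ℝ) * β j < (κ j : ℝ) * β j := by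
        apply mul_lt_mul_of_pos_right _ (hβ j)
        exact_mod_cast Nat.lt_of_lt_of_le (Nat.lt_succ_self _) hj
      have h3 : (κ j : ℝ) * β j ≤ ∑ i, (κ i : ℝ) * β i :=
        Finset.single_le_sum (f := fun i => (κ i : ℝ) * β i)
          (fun i _ => mul_nonneg (Nat.cast_nonneg _) (hβ i).le) (Finset.mem_univ j)
      linarith
    rw [hF]
    dsimp only
    rw [if_neg (not_le.mpr hbig)]
  have hSummable : Summable F := summable_of_ne_finset_zero hout
  set K' : Finset (Fin d → ℕ) := K.filter (fun κ => (∑ j, (κ j : ℝ) * β j) ≤ (r : ℝ)) with hK'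
  have htsum : ∑' κ, F κ = ∑ κ ∈ K', (2:ℝ) ^ (∑ j, (κ j : ℝ) * α j) := by
    rw [tsum_eq_sum (s := K') ?_]
    · apply Finset.sum_congr rfl
      intro κ hκ
      rw [hK', Finset.mem_filter] at hκ
      rw [hF]
      dsimp only
      rw [if_pos hκ.2]
    · intro κ hκ
      by_cases hκK : κ ∈ K
      · rw [hK', Finset.mem_filter] at hκ
        push_neg at hκ
        rw [hF]
        dsimp only
        rw [if_neg (not_le.mpr (hκ hκK))]
      · exact hout κ hκK
  constructor
  · -- LOWER BOUND
    rw [hexp r]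
    by_cases hrbig : d * c0 ≤ r
    · -- main case : r ≥ d*c0
      set m : ℕ := r / (d * c0) with hm
      have hm1 : 1 ≤ m := (Nat.one_le_div_iff hdc0).mpr hrbig
      set G : Finset (Fin d → ℕ) :=
        Fintype.piFinset (fun j => if j ∈ T.erase j₀ then Finset.range m else {0}) with hG
      have hGmem : ∀ g ∈ G, (∀ j, j ∉ T.erase j₀ → g j = 0) ∧ (∀ j, g j ≤ m - 1) := by
        intro g hg
        rw [hG, Fintype.mem_piFinset] at hg
        constructor
        · intro j hj
          have := hg j
          rw [if_neg hj] at this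
          simpa using this
        · intro j
          have := hg j
          by_cases hj : j ∈ T.erase j₀
          · rw [if_pos hj, Finset.mem_range] at this
            omega
          · rw [if_neg hj] at this
            simp only [Finset.mem_singleton] at this
            omega
      have hgj₀ : ∀ g ∈ G, g j₀ = 0 := fun g hg =>
        (hGmem g hg).1 j₀ (Finset.notMem_erase j₀ T)
      have hSg : ∀ g ∈ G, ∑ j, (g j : ℝ) * β j ≤ (r : ℝ) - (d:ℝ) * c0 := by
        intro g hg
        have key : ∀ j, (g j : ℝ) * β j ≤ ((m:ℝ) - 1) * c0 := by
          intro j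
          have h1 : (g j : ℝ) ≤ (m:ℝ) - 1 := by
            have h := (hGmem g hg).2 j
            have hcast : (g j : ℝ) ≤ ((m - 1 : ℕ) : ℝ) := by exact_mod_cast h
            rw [Nat.cast_sub hm1] at hcast
            simpa using hcast
          have hm1R : (0:ℝ) ≤ (m:ℝ) - 1 := by
            have : (1:ℝ) ≤ m := by exact_mod_cast hm1
            linarith
          calc (g j : ℝ) * β j ≤ ((m:ℝ)-1) * β j := mul_le_mul_of_nonneg_right h1 (hβ j).le
          _ ≤ ((m:ℝ)-1) * c0 := mul_le_mul_of_nonneg_left (hc0 j) hm1R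
        have hmul : (m:ℝ) * ((d:ℝ) * c0) ≤ r := by
          have h := Nat.div_mul_le_self r (d * c0)
          have : ((r / (d*c0) * (d * c0) : ℕ) : ℝ) ≤ (r : ℝ) := by exact_mod_cast h
          push_cast at this
          rw [hm]
          push_cast
          nlinarith [this]
        calc ∑ j, (g j : ℝ) * β j ≤ ∑ _j : Fin d, ((m:ℝ) - 1) * c0 :=
              Finset.sum_le_sum (fun j _ => key j)
        _ = (d:ℝ) * (((m:ℝ)-1) * c0) := by
              rw [Finset.sum_const, Finset.card_univ, Fintype.card_fin, nsmul_eq_mul]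
        _ ≤ (r : ℝ) - (d:ℝ) * c0 := by nlinarith [hdc0R]
      set kk : (Fin d → ℕ) → ℕ :=
        fun g => ⌊((r:ℝ) - ∑ j, (g j : ℝ) * β j) / β j₀⌋₊ with hkk
      set φ : (Fin d → ℕ) → (Fin d → ℕ) := fun g => Function.update g j₀ (kk g) with hφ
      have hφβ : ∀ g ∈ G, (∑ j, ((φ g) j : ℝ) * β j ≤ (r:ℝ)) ∧
          ((r:ℝ) - β j₀ < ∑ j, ((φ g) j : ℝ) * β j) := by
        intro g hg
        have hS : ∑ j, (g j : ℝ) * β j ≤ (r:ℝ) := le_trans (hSg g hg) (by linarith [hdc0R])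
        have hx0 : 0 ≤ ((r:ℝ) - ∑ j, (g j : ℝ) * β j) / β j₀ :=
          div_nonneg (by linarith) (hβ j₀).le
        have hfl : (kk g : ℝ) * β j₀ ≤ (r:ℝ) - ∑ j, (g j : ℝ) * β j := by
          have h := Nat.floor_le hx0
          calc (kk g:ℝ) * β j₀
              ≤ (((r:ℝ) - ∑ j, (g j : ℝ) * β j) / β j₀) * β j₀ :=
                mul_le_mul_of_nonneg_right h (hβ j₀).le
          _ = (r:ℝ) - ∑ j, (g j : ℝ) * β j := div_mul_cancel₀ _ (hβ j₀).ne'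
        have hfl2 : (r:ℝ) - (∑ j, (g j : ℝ) * β j) - β j₀ < (kk g : ℝ) * β j₀ := by
          have h := Nat.lt_floor_add_one (((r:ℝ) - ∑ j, (g j : ℝ) * β j) / β j₀)
          have h2 := mul_lt_mul_of_pos_right h (hβ j₀)
          rw [div_mul_cancel₀ _ (hβ j₀).ne'] at h2
          nlinarith [h2]
        have hsum : ∑ j, ((φ g) j : ℝ) * β j
            = (∑ j, (g j : ℝ) * β j) + ((kk g : ℝ) - (g j₀ : ℝ)) * β j₀ :=
          sum_upd β g j₀ (kk g)
        rw [hgj₀ g hg] at hsum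
        norm_num at hsum
        constructor
        · rw [hsum]; linarith
        · rw [hsum]; linarith
      have hφα : ∀ g ∈ G, ∑ j, ((φ g) j : ℝ) * α j = M * ∑ j, ((φ g) j : ℝ) * β j := by
        intro g hg
        rw [Finset.mul_sum]
        apply Finset.sum_congr rfl
        intro j _
        by_cases hj : j ∈ T
        · rw [hαT j hj]; ring
        · have hjj₀ : j ≠ j₀ := fun h => hj (h ▸ hj₀T)
          have : (φ g) j = 0 := by
            rw [hφ]
            dsimp only
            rw [Function.update_of_ne hjj₀]
            exact (hGmem g hg).1 j (fun hmem => hj (Finset.mem_of_mem_erase hmem))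
          rw [this]
          norm_num
      have hFlower : ∀ g ∈ G, (2:ℝ) ^ (M * ((r:ℝ) - β j₀)) ≤ F (φ g) := by
        intro g hg
        rw [hF]
        dsimp only
        rw [if_pos (hφβ g hg).1, hφα g hg]
        apply Real.rpow_le_rpow_of_exponent_le one_le_two
        exact mul_le_mul_of_nonneg_left (hφβ g hg).2.le hMpos.le
      have hinj : ∀ g ∈ G, ∀ g' ∈ G, φ g = φ g' → g = g' := by
        intro g hg g' hg' h
        funext j
        by_cases hj : j = j₀
        · subst hj; rw [hgj₀ g hg, hgj₀ g' hg']
        · have := congrFun h j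
          rw [hφ] at this
          dsimp only at this
          rwa [Function.update_of_ne hj, Function.update_of_ne hj] at this
      have h1 : (G.card : ℝ) * (2:ℝ) ^ (M * ((r:ℝ) - β j₀)) ≤ ∑' κ, F κ := by
        calc (G.card : ℝ) * (2:ℝ) ^ (M * ((r:ℝ) - β j₀))
            = ∑ _g ∈ G, (2:ℝ) ^ (M * ((r:ℝ) - β j₀)) := by
              rw [Finset.sum_const, nsmul_eq_mul]
        _ ≤ ∑ g ∈ G, F (φ g) := Finset.sum_le_sum (fun g hg => hFlower g hg)
        _ = ∑ κ ∈ G.image φ, F κ := (Finset.sum_image hinj).symm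
        _ ≤ ∑' κ, F κ := Summable.sum_le_tsum _ (fun κ _ => hFnonneg κ) hSummable
      have hcard : G.card = m ^ n := by
        rw [hG, Fintype.card_piFinset]
        have hc : ∀ j : Fin d, ((if j ∈ T.erase j₀ then Finset.range m else ({0} : Finset ℕ)).card)
            = if j ∈ T.erase j₀ then m else 1 := by
          intro j; split <;> simp
        rw [Finset.prod_congr rfl (fun j _ => hc j), Finset.prod_ite_mem,
          Finset.univ_inter, Finset.prod_const, Finset.card_erase_of_mem hj₀T]
      have hmge : (r:ℝ) / (2 * ((d:ℝ) * c0)) ≤ (m:ℝ) := by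
        have hlt : r < d * c0 * (r / (d * c0)) + d * c0 := by
          have h1 := Nat.div_add_mod r (d * c0)
          have h2 := Nat.mod_lt r hdc0
          omega
        rw [← hm] at hlt
        have hltR : (r:ℝ) < (d:ℝ) * c0 * m + (d:ℝ) * c0 := by exact_mod_cast hlt
        have hm1R : (1:ℝ) ≤ (m:ℝ) := by exact_mod_cast hm1
        rw [div_le_iff₀ (by positivity)]
        nlinarith [hdc0R]
      have e1 : c₁' * (2:ℝ) ^ (M * (r:ℝ)) * (r:ℝ) ^ n
          = (2:ℝ) ^ (M * ((r:ℝ) - β j₀)) * ((r:ℝ) / (2 * ((d:ℝ) * c0))) ^ n := by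
        have h2 : (2:ℝ) ^ (-(M * β j₀)) * (2:ℝ) ^ (M * (r:ℝ))
            = (2:ℝ) ^ (M * ((r:ℝ) - β j₀)) := by
          rw [← Real.rpow_add two_pos]
          congr 1
          ring
        rw [hc₁', div_pow, ← h2]
        ring
      calc min c₁' c₁'' * (2:ℝ) ^ (M * (r:ℝ)) * (r:ℝ) ^ n
          ≤ c₁' * (2:ℝ) ^ (M * (r:ℝ)) * (r:ℝ) ^ n := by
            have h2 : (0:ℝ) ≤ (2:ℝ) ^ (M * (r:ℝ)) := Real.rpow_nonneg (by norm_num) _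
            have h3 : (0:ℝ) ≤ (r:ℝ) ^ n := by positivity
            exact mul_le_mul_of_nonneg_right
              (mul_le_mul_of_nonneg_right (min_le_left _ _) h2) h3
      _ = (2:ℝ) ^ (M * ((r:ℝ) - β j₀)) * ((r:ℝ) / (2 * ((d:ℝ) * c0))) ^ n := e1
      _ ≤ (2:ℝ) ^ (M * ((r:ℝ) - β j₀)) * (m:ℝ) ^ n := by
            apply mul_le_mul_of_nonneg_left _ (Real.rpow_nonneg (by norm_num) _)
            exact pow_le_pow_left₀ (by positivity) hmge n
      _ = (G.card : ℝ) * (2:ℝ) ^ (M * ((r:ℝ) - β j₀)) := by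
            rw [hcard]; push_cast; ring
      _ ≤ ∑' κ, F κ := h1
    · -- small case : r < d*c0
      push_neg at hrbig
      have hF0 : F (fun _ => 0) = 1 := by
        rw [hF]
        dsimp only
        rw [if_pos (by simp)]
        norm_num
      have h1le : (1:ℝ) ≤ ∑' κ, F κ := by
        have := Summable.le_tsum hSummable (fun _ => 0) (fun j _ => hFnonneg j)
        rwa [hF0] at this
      have hrle : (r:ℝ) ≤ ((d * c0 : ℕ) : ℝ) := by exact_mod_cast hrbig.le
      have hXpos : (0:ℝ) < (2:ℝ) ^ (M * ((d * c0 : ℕ) : ℝ)) * (((d * c0 : ℕ) : ℝ)) ^ n := by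
        apply mul_pos (Real.rpow_pos_of_pos two_pos _)
        apply pow_pos
        exact_mod_cast hdc0
      calc min c₁' c₁'' * (2:ℝ) ^ (M * (r:ℝ)) * (r:ℝ) ^ n
          ≤ c₁'' * (2:ℝ) ^ (M * ((d * c0 : ℕ) : ℝ)) * (((d * c0 : ℕ) : ℝ)) ^ n := by
            apply mul_le_mul
            · apply mul_le_mul (min_le_right _ _)
                (Real.rpow_le_rpow_of_exponent_le one_le_two
                  (mul_le_mul_of_nonneg_left hrle hMpos.le))
                (Real.rpow_nonneg (by norm_num) _) hc₁''pos.le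
            · exact pow_le_pow_left₀ (by positivity) hrle n
            · positivity
            · exact mul_nonneg hc₁''pos.le (Real.rpow_nonneg (by norm_num) _)
      _ = 1 := by
            rw [hc₁'']
            field_simp
      _ ≤ ∑' κ, F κ := h1le
  · -- UPPER BOUND
    rw [hexp r, htsum]
    set π : (Fin d → ℕ) → (Fin d → ℕ) := fun κ => Function.update κ j₀ 0 with hπ
    set K'' : Finset (Fin d → ℕ) := K'.filter (fun ρ => ρ j₀ = 0) with hK''
    have hmaps : ∀ κ ∈ K', π κ ∈ K'' := by
      intro κ hκ
      rw [hK', Finset.mem_filter] at hκ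
      obtain ⟨hκK, hκβ⟩ := hκ
      rw [hK'', Finset.mem_filter, hK', Finset.mem_filter]
      refine ⟨⟨?_, ?_⟩, ?_⟩
      · rw [hK, Fintype.mem_piFinset] at hκK ⊢
        intro j
        by_cases hj : j = j₀
        · subst hj
          rw [hπ]; dsimp only
          rw [Function.update_self]
          simp
        · rw [hπ]; dsimp only
          rw [Function.update_of_ne hj]
          exact hκK j
      · rw [hπ]; dsimp only
        rw [sum_upd β κ j₀ 0]
        push_cast
        nlinarith [hκβ, mul_nonneg (Nat.cast_nonneg (κ j₀) : (0:ℝ) ≤ (κ j₀:ℝ)) (hβ j₀).le]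
      · rw [hπ]; dsimp only
        rw [Function.update_self]
    have hinner : ∀ ρ ∈ K'', ∑ κ ∈ K'.filter (fun κ => π κ = ρ), (2:ℝ) ^ (∑ j, (κ j:ℝ) * α j)
        ≤ Cq * (2:ℝ) ^ (M * (r:ℝ)) * ∏ j, (2:ℝ) ^ (-((M * β j - α j) * (ρ j : ℝ))) := by
      intro ρ hρ
      rw [hK'', Finset.mem_filter] at hρ
      obtain ⟨hρK', hρ0⟩ := hρ
      rw [hK', Finset.mem_filter] at hρK'
      have hQ : ∑ j, (ρ j : ℝ) * β j ≤ (r:ℝ) := hρK'.2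
      set Q : ℝ := ∑ j, (ρ j : ℝ) * β j with hQdef
      set fib := K'.filter (fun κ => π κ = ρ) with hfib
      have hκeq : ∀ κ ∈ fib, Function.update ρ j₀ (κ j₀) = κ := by
        intro κ hκ
        rw [hfib, Finset.mem_filter] at hκ
        have hπκ := hκ.2
        funext j
        by_cases hj : j = j₀
        · subst hj; rw [Function.update_self]
        · rw [Function.update_of_ne hj]
          have h3 := congrFun hπκ j
          rw [hπ] at h3; dsimp only at h3
          rw [Function.update_of_ne hj] at h3
          exact h3.symm
      set Kx : ℕ := ⌊((r:ℝ) - Q) / β j₀⌋₊ with hKx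
      have hinj2 : ∀ κ ∈ fib, ∀ κ' ∈ fib, κ j₀ = κ' j₀ → κ = κ' := by
        intro κ hκ κ' hκ' h
        rw [← hκeq κ hκ, ← hκeq κ' hκ', h]
      have himg : ∑ κ ∈ fib, (2:ℝ) ^ (∑ j, (κ j:ℝ) * α j)
          = ∑ k ∈ fib.image (fun κ => κ j₀),
              (2:ℝ) ^ (∑ j, ((Function.update ρ j₀ k) j : ℝ) * α j) := by
        rw [Finset.sum_image hinj2]
        apply Finset.sum_congr rfl
        intro κ hκ
        rw [hκeq κ hκ]
      have hsub : fib.image (fun κ => κ j₀) ⊆ Finset.range (Kx + 1) := by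
        intro k hk
        rw [Finset.mem_image] at hk
        obtain ⟨κ, hκ, hkeq⟩ := hk
        have hκ' := hκ
        rw [hfib, Finset.mem_filter] at hκ'
        have hκK' := hκ'.1
        rw [hK', Finset.mem_filter] at hκK'
        have hκβ : ∑ j, (κ j:ℝ) * β j ≤ (r:ℝ) := hκK'.2
        have hupd : Function.update ρ j₀ k = κ := by rw [← hkeq]; exact hκeq κ hκ
        have he := sum_upd β ρ j₀ k
        rw [hupd, hρ0] at he
        have hkb : (k:ℝ) * β j₀ ≤ (r:ℝ) - Q := by
          rw [he] at hκβ
          push_cast at hκβ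
          nlinarith [hκβ]
        have hkd : (k:ℝ) ≤ ((r:ℝ) - Q)/β j₀ := (le_div_iff₀ (hβ j₀)).mpr hkb
        have := Nat.le_floor hkd
        rw [Finset.mem_range]
        omega
      have hH : ∀ k : ℕ, (2:ℝ) ^ (∑ j, ((Function.update ρ j₀ k) j : ℝ) * α j)
          = (2:ℝ) ^ (∑ j, (ρ j:ℝ) * α j) * q ^ k := by
        intro k
        rw [sum_upd α ρ j₀ k, hρ0]
        have hee : (∑ j, (ρ j:ℝ) * α j) + ((k:ℝ) - ((0:ℕ):ℝ)) * α j₀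
            = (∑ j, (ρ j:ℝ) * α j) + α j₀ * (k:ℝ) := by push_cast; ring
        rw [hee, Real.rpow_add two_pos, Real.rpow_mul (by norm_num : (0:ℝ) ≤ 2),
          Real.rpow_natCast, ← hq]
      have hq0 : (0:ℝ) < q := lt_trans one_pos hq1
      have hgeom : ∑ k ∈ Finset.range (Kx+1), q ^ k ≤ Cq * q ^ Kx := by
        rw [geom_sum_eq (ne_of_gt hq1)]
        have hq1' : (0:ℝ) < q - 1 := by linarith
        calc (q^(Kx+1) - 1)/(q-1) ≤ q^(Kx+1)/(q-1) :=
              (div_le_div_iff_of_pos_right hq1').mpr (by linarith)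
        _ = Cq * q^Kx := by
              rw [hCq, pow_succ]
              field_simp
      have hqKx : q ^ Kx ≤ (2:ℝ) ^ (M * ((r:ℝ) - Q)) := by
        have h1 : (Kx:ℝ) ≤ ((r:ℝ) - Q)/β j₀ :=
          Nat.floor_le (div_nonneg (by linarith) (hβ j₀).le)
        have h2 : α j₀ * (Kx:ℝ) ≤ M * ((r:ℝ) - Q) := by
          rw [hαj₀]
          calc M * β j₀ * (Kx:ℝ) ≤ M * β j₀ * (((r:ℝ)-Q)/β j₀) :=
                mul_le_mul_of_nonneg_left h1 (mul_pos hMpos (hβ j₀)).le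
          _ = M * ((r:ℝ) - Q) := by
                rw [mul_assoc M (β j₀) _, mul_comm (β j₀) _, div_mul_cancel₀ _ (hβ j₀).ne']
        calc q ^ Kx = (2:ℝ) ^ (α j₀ * (Kx:ℝ)) := by
              rw [Real.rpow_mul (by norm_num : (0:ℝ) ≤ 2), Real.rpow_natCast, ← hq]
        _ ≤ (2:ℝ)^(M*((r:ℝ)-Q)) := Real.rpow_le_rpow_of_exponent_le one_le_two h2
      have hEeq : (∑ j, (ρ j:ℝ) * α j) + M*((r:ℝ) - Q)
          = M*(r:ℝ) + ∑ j, (-((M*β j - α j) * (ρ j:ℝ))) := by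
        have hterm : ∀ j : Fin d, -((M*β j - α j) * (ρ j:ℝ))
            = (ρ j:ℝ)*α j - M*((ρ j:ℝ)*β j) := fun j => by ring
        rw [Finset.sum_congr rfl (fun j _ => hterm j), Finset.sum_sub_distrib,
          ← Finset.mul_sum, hQdef]
        ring
      have hkey : (2:ℝ)^(∑ j, (ρ j:ℝ)*α j) * (2:ℝ)^(M*((r:ℝ)-Q))
          = (2:ℝ)^(M*(r:ℝ)) * ∏ j, (2:ℝ)^(-((M*β j - α j)*(ρ j:ℝ))) := by
        rw [← Real.rpow_add two_pos, hEeq, Real.rpow_add two_pos,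
          rpow_sum_eq' Finset.univ _]
      calc ∑ κ ∈ fib, (2:ℝ)^(∑ j, (κ j:ℝ)*α j)
          = ∑ k ∈ fib.image (fun κ => κ j₀),
              (2:ℝ)^(∑ j, ((Function.update ρ j₀ k) j : ℝ)*α j) := himg
      _ ≤ ∑ k ∈ Finset.range (Kx+1),
              (2:ℝ)^(∑ j, ((Function.update ρ j₀ k) j : ℝ)*α j) :=
          Finset.sum_le_sum_of_subset_of_nonneg hsub
            (fun k _ _ => Real.rpow_nonneg (by norm_num) _)
      _ = ∑ k ∈ Finset.range (Kx+1), (2:ℝ)^(∑ j, (ρ j:ℝ)*α j) * q ^ k :=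
          Finset.sum_congr rfl (fun k _ => hH k)
      _ = (2:ℝ)^(∑ j, (ρ j:ℝ)*α j) * ∑ k ∈ Finset.range (Kx+1), q ^ k := by
          rw [Finset.mul_sum]
      _ ≤ (2:ℝ)^(∑ j, (ρ j:ℝ)*α j) * (Cq * q ^ Kx) :=
          mul_le_mul_of_nonneg_left hgeom (Real.rpow_nonneg (by norm_num) _)
      _ ≤ (2:ℝ)^(∑ j, (ρ j:ℝ)*α j) * (Cq * (2:ℝ)^(M*((r:ℝ)-Q))) := by
          apply mul_le_mul_of_nonneg_left _ (Real.rpow_nonneg (by norm_num) _)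
          exact mul_le_mul_of_nonneg_left hqKx hCqpos.le
      _ = Cq * ((2:ℝ)^(∑ j, (ρ j:ℝ)*α j) * (2:ℝ)^(M*((r:ℝ)-Q))) := by ring
      _ = Cq * ((2:ℝ)^(M*(r:ℝ)) * ∏ j, (2:ℝ)^(-((M*β j - α j)*(ρ j:ℝ)))) := by rw [hkey]
      _ = Cq * (2:ℝ)^(M*(r:ℝ)) * ∏ j, (2:ℝ)^(-((M*β j - α j)*(ρ j:ℝ))) := by ring
    have hfibtotal : ∑ κ ∈ K', (2:ℝ)^(∑ j, (κ j:ℝ)*α j)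
        = ∑ ρ ∈ K'', ∑ κ ∈ K'.filter (fun κ => π κ = ρ), (2:ℝ)^(∑ j, (κ j:ℝ)*α j) :=
      (Finset.sum_fiberwise_of_maps_to hmaps _).symm
    have hP : ∑ ρ ∈ K'', ∏ j, (2:ℝ)^(-((M*β j - α j)*(ρ j:ℝ)))
        ≤ ((r:ℝ)*((b0:ℝ)+1))^n * C₀ := by
      set P : Finset (Fin d → ℕ) :=
        Fintype.piFinset (fun j => if j = j₀ then ({0}:Finset ℕ) else Finset.range (r*b0+1))
        with hPdef
      have hsub2 : K'' ⊆ P := by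
        intro ρ hρ
        rw [hK'', Finset.mem_filter] at hρ
        obtain ⟨hρK', hρ0⟩ := hρ
        rw [hK', Finset.mem_filter, hK, Fintype.mem_piFinset] at hρK'
        rw [hPdef, Fintype.mem_piFinset]
        intro j
        by_cases hj : j = j₀
        · subst hj; rw [if_pos rfl]; simp [hρ0]
        · rw [if_neg hj]; exact hρK'.1 j
      calc ∑ ρ ∈ K'', ∏ j, (2:ℝ)^(-((M*β j - α j)*(ρ j:ℝ)))
          ≤ ∑ ρ ∈ P, ∏ j, (2:ℝ)^(-((M*β j - α j)*(ρ j:ℝ))) :=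
            Finset.sum_le_sum_of_subset_of_nonneg hsub2
              (fun ρ _ _ => Finset.prod_nonneg (fun j _ => Real.rpow_nonneg (by norm_num) _))
      _ = ∏ j, ∑ k ∈ (if j = j₀ then ({0}:Finset ℕ) else Finset.range (r*b0+1)),
              (2:ℝ)^(-((M*β j - α j)*(k:ℝ))) := by
            rw [hPdef]
            exact (Finset.prod_univ_sum
              (fun j => if j = j₀ then ({0}:Finset ℕ) else Finset.range (r*b0+1))
              (fun j k => (2:ℝ)^(-((M*β j - α j)*(k:ℝ))))).symm
      _ ≤ ∏ j, ((if j ∈ T.erase j₀ then (r:ℝ)*((b0:ℝ)+1) else 1) *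
              (if j ∈ T then 1 else (1 - (2:ℝ)^(-(M*β j - α j)))⁻¹)) := by
            apply Finset.prod_le_prod
            · intro j _
              exact Finset.sum_nonneg (fun k _ => Real.rpow_nonneg (by norm_num) _)
            · intro j _
              by_cases hj : j = j₀
              · rw [if_pos hj, if_neg (by rw [hj]; exact Finset.notMem_erase j₀ T),
                  if_pos (show j ∈ T by rw [hj]; exact hj₀T)]
                simp
              · rw [if_neg hj]
                by_cases hjT : j ∈ T
                · have hjT' : j ∈ T.erase j₀ := Finset.mem_erase.mpr ⟨hj, hjT⟩
                  rw [if_pos hjT', if_pos hjT, mul_one]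
                  have hε0 : M * β j - α j = 0 := by rw [hαT j hjT]; ring
                  have hone : ∀ k ∈ Finset.range (r*b0+1),
                      (2:ℝ)^(-((M*β j - α j)*(k:ℝ))) = 1 := by
                    intro k _; rw [hε0]; norm_num
                  rw [Finset.sum_congr rfl hone, Finset.sum_const, Finset.card_range,
                    nsmul_eq_mul, mul_one]
                  push_cast
                  have h1r : (1:ℝ) ≤ r := by exact_mod_cast hr
                  nlinarith [(Nat.cast_nonneg b0 : (0:ℝ) ≤ (b0:ℝ))]
                · have hjT' : j ∉ T.erase j₀ := fun h => hjT (Finset.mem_of_mem_erase h)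
                  rw [if_neg hjT', if_neg hjT, one_mul]
                  have hx0 : (0:ℝ) ≤ (2:ℝ)^(-(M*β j - α j)) := Real.rpow_nonneg (by norm_num) _
                  have hx1 : (2:ℝ)^(-(M*β j - α j)) < 1 := hfactpos j hjT
                  have heq : ∀ k ∈ Finset.range (r*b0+1),
                      (2:ℝ)^(-((M*β j - α j)*(k:ℝ))) = ((2:ℝ)^(-(M*β j - α j)))^k := by
                    intro k _
                    rw [← Real.rpow_natCast ((2:ℝ)^(-(M*β j - α j))) k,
                      ← Real.rpow_mul (by norm_num : (0:ℝ) ≤ 2)]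
                    congr 1
                    ring
                  rw [Finset.sum_congr rfl heq]
                  exact geom_sum_le_inv _ hx0 hx1 _
      _ = ((r:ℝ)*((b0:ℝ)+1))^n * C₀ := by
            rw [Finset.prod_mul_distrib, hC₀]
            congr 1
            rw [Finset.prod_ite_mem, Finset.univ_inter, Finset.prod_const,
              Finset.card_erase_of_mem hj₀T, ← hn]
    calc ∑ κ ∈ K', (2:ℝ)^(∑ j, (κ j:ℝ)*α j)
        = ∑ ρ ∈ K'', ∑ κ ∈ K'.filter (fun κ => π κ = ρ), (2:ℝ)^(∑ j, (κ j:ℝ)*α j) :=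
          hfibtotal
    _ ≤ ∑ ρ ∈ K'', Cq * (2:ℝ)^(M*(r:ℝ)) * ∏ j, (2:ℝ)^(-((M*β j - α j)*(ρ j:ℝ))) :=
        Finset.sum_le_sum hinner
    _ = Cq * (2:ℝ)^(M*(r:ℝ)) * ∑ ρ ∈ K'', ∏ j, (2:ℝ)^(-((M*β j - α j)*(ρ j:ℝ))) := by
        rw [← Finset.mul_sum]
    _ ≤ Cq * (2:ℝ)^(M*(r:ℝ)) * (((r:ℝ)*((b0:ℝ)+1))^n * C₀) := by
        apply mul_le_mul_of_nonneg_left hP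
        exact mul_nonneg hCqpos.le (Real.rpow_nonneg (by norm_num) _)
    _ = c₂ * (2:ℝ)^(M*(r:ℝ)) * (r:ℝ)^n := by
        rw [hc₂def, mul_pow]
        ring
end

section
/- Let d ∈ ℕ, l ∈ ℤ₊^d, λ ∈ ℤ₊^d with λ ≤ l componentwise, 1 ≤ p, q ≤ ∞, and ρ, σ ∈ (ℝ₊)^d. Then there exists a constant c > 0 depending only on d, l, λ, ρ, σ such that for all measurable sets D, Q ⊆ ℝ^d for which there exist δ ∈ (ℝ₊)^d and x⁰ ∈ ℝ^d with D ⊆ x⁰ + ρδ·B^d and x⁰ + σδ·I^d ⊆ Q, and for every polynomial f of componentwise degree at most l, ‖D^λ f‖_{L_q(D)} ≤ c · δ^{-λ - (1/p)·e + (1/q)·e} · ‖f‖_{L_p(Q)}, where δ^μ = ∏_j δ_j^{μ_j} and e = (1,...,1). -/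
/-- Mixed partial derivative `D^λ` of a multivariate polynomial. -/
noncomputable def mvDeriv {d : ℕ} (lam : Fin d → ℕ) (f : MvPolynomial (Fin d) ℝ) :
    MvPolynomial (Fin d) ℝ :=
  (List.finRange d).foldl (fun g j => (fun h => MvPolynomial.pderiv j h)^[lam j] g) f

open MvPolynomial

namespace BMaux

variable {d : ℕ}

/-- `mvDeriv` as a linear map. -/
noncomputable def mvDerivL (lam : Fin d → ℕ) :
    MvPolynomial (Fin d) ℝ →ₗ[ℝ] MvPolynomial (Fin d) ℝ :=
  (List.finRange d).foldl
    (fun L j => (((pderiv j : Derivation ℝ (MvPolynomial (Fin d) ℝ) (MvPolynomial (Fin d) ℝ))).toLinearMap ^ lam j) ∘ₗ L)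
    LinearMap.id

lemma foldl_apply (lam : Fin d → ℕ) (L : List (Fin d))
    (A : MvPolynomial (Fin d) ℝ →ₗ[ℝ] MvPolynomial (Fin d) ℝ) (f : MvPolynomial (Fin d) ℝ) :
    (L.foldl (fun L j =>
        (((pderiv j : Derivation ℝ (MvPolynomial (Fin d) ℝ) (MvPolynomial (Fin d) ℝ))).toLinearMap ^ lam j) ∘ₗ L) A) f
      = L.foldl (fun g j => (fun h => MvPolynomial.pderiv j h)^[lam j] g) (A f) := by
  induction L generalizing A f with
  | nil => rfl
  | cons j L ih =>
      simp only [List.foldl_cons]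
      rw [ih]
      congr 1
      simp [Module.End.pow_apply]

lemma mvDeriv_eq (lam : Fin d → ℕ) (f : MvPolynomial (Fin d) ℝ) :
    mvDeriv lam f = mvDerivL lam f := by
  rw [mvDerivL, foldl_apply]
  rfl



/-- The affine substitution `X j ↦ x₀ j + δ j * X j`. -/
noncomputable def aff (x₀ δ : Fin d → ℝ) : Fin d → MvPolynomial (Fin d) ℝ :=
  fun j => C (x₀ j) + C (δ j) * X j

lemma pderiv_aeval_aff (x₀ δ : Fin d → ℝ) (i : Fin d) (f : MvPolynomial (Fin d) ℝ) :
    pderiv i (aeval (aff x₀ δ) f) = C (δ i) * aeval (aff x₀ δ) (pderiv i f) := by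
  induction f using MvPolynomial.induction_on with
  | C a => simp
  | add p q hp hq => simp only [map_add, hp, hq, mul_add]
  | mul_X p j hp =>
      rw [map_mul, aeval_X, pderiv_mul, hp, pderiv_mul, map_add, map_mul, aeval_X]
      rcases eq_or_ne i j with rfl | hij
      · simp [aff, pderiv_X_self]
        ring
      · rw [pderiv_X_of_ne (Ne.symm hij)]
        have h0 : pderiv i (aff x₀ δ j) = 0 := by
          simp [aff, pderiv_X_of_ne (Ne.symm hij)]
        simp only [h0, mul_zero, add_zero, map_zero, zero_mul]
        ring

lemma iterate_pderiv_C_mul (i : Fin d) (a : ℝ) (n : ℕ) (f : MvPolynomial (Fin d) ℝ) :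
    (fun h => pderiv i h)^[n] (C a * f) = C a * (fun h => pderiv i h)^[n] f := by
  induction n generalizing f with
  | zero => simp
  | succ n ih =>
      rw [Function.iterate_succ_apply, Function.iterate_succ_apply]
      show (fun h => pderiv i h)^[n] (pderiv i (C a * f)) = _
      rw [pderiv_mul, pderiv_C, zero_mul, zero_add, ih]

lemma foldl_C_mul (lam : Fin d → ℕ) (L : List (Fin d)) (a : ℝ) (f : MvPolynomial (Fin d) ℝ) :
    L.foldl (fun g j => (fun h => pderiv j h)^[lam j] g) (C a * f)
      = C a * L.foldl (fun g j => (fun h => pderiv j h)^[lam j] g) f := by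
  induction L generalizing f with
  | nil => rfl
  | cons j L ih => simp only [List.foldl_cons, iterate_pderiv_C_mul, ih]

lemma iterate_pderiv_aeval_aff (x₀ δ : Fin d → ℝ) (i : Fin d) (n : ℕ)
    (f : MvPolynomial (Fin d) ℝ) :
    (fun h => pderiv i h)^[n] (aeval (aff x₀ δ) f)
      = C (δ i ^ n) * aeval (aff x₀ δ) ((fun h => pderiv i h)^[n] f) := by
  induction n generalizing f with
  | zero => simp
  | succ n ih =>
      rw [Function.iterate_succ_apply]
      show (fun h => pderiv i h)^[n] (pderiv i (aeval (aff x₀ δ) f)) = _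
      rw [pderiv_aeval_aff, iterate_pderiv_C_mul, ih, Function.iterate_succ_apply,
        ← mul_assoc, ← C_mul]
      congr 2
      ring

lemma foldl_aeval_aff (lam : Fin d → ℕ) (x₀ δ : Fin d → ℝ) (L : List (Fin d))
    (f : MvPolynomial (Fin d) ℝ) :
    L.foldl (fun g j => (fun h => pderiv j h)^[lam j] g) (aeval (aff x₀ δ) f)
      = C ((L.map fun j => δ j ^ lam j).prod)
          * aeval (aff x₀ δ) (L.foldl (fun g j => (fun h => pderiv j h)^[lam j] g) f) := by
  induction L generalizing f with
  | nil => simp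
  | cons j L ih =>
      simp only [List.foldl_cons, List.map_cons, List.prod_cons]
      rw [iterate_pderiv_aeval_aff, foldl_C_mul, ih, ← mul_assoc, ← C_mul]

lemma mvDeriv_aeval_aff (lam : Fin d → ℕ) (x₀ δ : Fin d → ℝ) (f : MvPolynomial (Fin d) ℝ) :
    mvDeriv lam (aeval (aff x₀ δ) f)
      = C (∏ j, δ j ^ lam j) * aeval (aff x₀ δ) (mvDeriv lam f) := by
  unfold mvDeriv
  rw [foldl_aeval_aff, Fin.prod_univ_def]

lemma eval_aeval_aff (x₀ δ : Fin d → ℝ) (x : Fin d → ℝ) (f : MvPolynomial (Fin d) ℝ) :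
    eval x (aeval (aff x₀ δ) f) = eval (fun j => x₀ j + δ j * x j) f := by
  rw [aeval_def, MvPolynomial.algebraMap_eq, ← eval_assoc]
  have h : (⇑(eval x) ∘ aff x₀ δ) = fun j => x₀ j + δ j * x j := by
    funext j; simp [aff]
  rw [h]

lemma degreeOf_aff_le (x₀ δ : Fin d → ℝ) (i j : Fin d) :
    degreeOf i (aff x₀ δ j) ≤ if j = i then 1 else 0 := by
  have h1 : degreeOf i (aff x₀ δ j)
      ≤ max (degreeOf i (C (x₀ j))) (degreeOf i (C (δ j) * X j)) := degreeOf_add_le _ _ _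
  have h2 : degreeOf i (C (δ j) * X j) ≤ degreeOf i (C (δ j)) + degreeOf i (X j) :=
    degreeOf_mul_le _ _ _
  simp only [degreeOf_C, degreeOf_X] at h1 h2
  rcases eq_or_ne i j with rfl | hij
  · rw [if_pos rfl] at h2
    rw [if_pos rfl]
    omega
  · rw [if_neg hij] at h2
    rw [if_neg (Ne.symm hij)]
    omega

lemma degreeOf_aeval_aff_le (x₀ δ : Fin d → ℝ) (i : Fin d) (f : MvPolynomial (Fin d) ℝ) :
    degreeOf i (aeval (aff x₀ δ) f) ≤ degreeOf i f := by
  rw [aeval_def, eval₂_eq]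
  refine le_trans (degreeOf_sum_le _ _ _) ?_
  rw [Finset.sup_le_iff]
  intro s hs
  have hterm : degreeOf i (algebraMap ℝ (MvPolynomial (Fin d) ℝ) (coeff s f)
      * ∏ j ∈ s.support, aff x₀ δ j ^ s j) ≤ s i := by
    rw [MvPolynomial.algebraMap_eq]
    refine le_trans (degreeOf_C_mul_le _ _ _) ?_
    refine le_trans (degreeOf_prod_le _ _ _) ?_
    calc ∑ j ∈ s.support, degreeOf i (aff x₀ δ j ^ s j)
        ≤ ∑ j ∈ s.support, (if j = i then s j else 0) := by
          refine Finset.sum_le_sum fun j _ => ?_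
          refine le_trans (degreeOf_pow_le _ _ _) ?_
          refine le_trans (Nat.mul_le_mul_left _ (degreeOf_aff_le x₀ δ i j)) ?_
          rcases eq_or_ne j i with rfl | hj
          · simp
          · simp [hj]
      _ ≤ s i := by
          rw [Finset.sum_ite_eq' s.support i (fun j => s j)]
          split <;> simp
  refine le_trans hterm ?_
  rw [degreeOf_eq_sup]
  exact Finset.le_sup (f := fun t => t i) hs



noncomputable def toExp (m : ℕ) (k : Fin d → Fin (m+1)) : Fin d →₀ ℕ :=
  Finsupp.equivFunOnFinite.symm fun j => (k j : ℕ)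

@[simp] lemma toExp_apply (m : ℕ) (k : Fin d → Fin (m+1)) (j : Fin d) :
    toExp m k j = (k j : ℕ) := rfl

lemma toExp_injective (m : ℕ) : Function.Injective (toExp (d := d) m) := by
  intro k k' h
  funext j
  have := congrArg (fun s => s j) h
  simpa [Fin.val_injective.eq_iff] using Fin.val_injective this

/-- Linear parametrization of polynomials of componentwise degree `≤ m` by coefficients. -/
noncomputable def Phi (m : ℕ) (c : (Fin d → Fin (m+1)) → ℝ) : MvPolynomial (Fin d) ℝ :=
  ∑ k : Fin d → Fin (m+1), monomial (toExp m k) (c k)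

lemma coeff_Phi (m : ℕ) (c : (Fin d → Fin (m+1)) → ℝ) (k : Fin d → Fin (m+1)) :
    coeff (toExp m k) (Phi m c) = c k := by
  classical
  rw [Phi, coeff_sum]
  rw [Finset.sum_eq_single k]
  · simp [coeff_monomial]
  · intro k' _ hk'
    rw [coeff_monomial, if_neg fun h => hk' (toExp_injective m h)]
  · simp

lemma Phi_smul (m : ℕ) (a : ℝ) (c : (Fin d → Fin (m+1)) → ℝ) :
    Phi m (a • c) = a • Phi m c := by
  rw [Phi, Phi, Finset.smul_sum]
  refine Finset.sum_congr rfl fun k _ => ?_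
  rw [smul_monomial]
  simp

lemma Phi_repr (m : ℕ) (f : MvPolynomial (Fin d) ℝ) (hf : ∀ j, degreeOf j f ≤ m) :
    Phi m (fun k => coeff (toExp m k) f) = f := by
  classical
  apply MvPolynomial.ext
  intro s
  by_cases hs : ∀ j, s j ≤ m
  · set k₀ : Fin d → Fin (m+1) := fun j => ⟨s j, Nat.lt_succ_of_le (hs j)⟩ with hk₀
    have hsk : toExp m k₀ = s := by
      apply Finsupp.ext; intro j; simp [hk₀]
    rw [← hsk, coeff_Phi]
  · push_neg at hs
    obtain ⟨j, hj⟩ := hs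
    have h1 : coeff s (Phi m (fun k => coeff (toExp m k) f)) = 0 := by
      rw [Phi, coeff_sum]
      refine Finset.sum_eq_zero fun k _ => ?_
      rw [coeff_monomial, if_neg]
      intro h
      have h2 := congrArg (fun t => t j) h
      simp only [toExp_apply] at h2
      have h3 := (k j).isLt
      omega
    rw [h1]
    by_contra h2
    have hmem : s ∈ f.support := by
      simpa [MvPolynomial.mem_support_iff] using fun h => h2 h.symm
    have : s j ≤ degreeOf j f := by
      rw [degreeOf_eq_sup]
      exact Finset.le_sup (f := fun t => t j) hmem
    have h4 := hf j
    omega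

lemma eval_mvDeriv_Phi (lam : Fin d → ℕ) (m : ℕ) (c : (Fin d → Fin (m+1)) → ℝ)
    (x : Fin d → ℝ) :
    eval x (mvDeriv lam (Phi m c))
      = ∑ k, c k * eval x (mvDeriv lam (monomial (toExp m k) 1)) := by
  have h1 : Phi m c = ∑ k : Fin d → Fin (m+1), c k • monomial (toExp m k) 1 := by
    refine Finset.sum_congr rfl fun k _ => ?_
    rw [smul_monomial, smul_eq_mul, mul_one]
  rw [h1, mvDeriv_eq, map_sum]
  rw [map_sum (eval x)]
  refine Finset.sum_congr rfl fun k _ => ?_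
  rw [map_smul, ← mvDeriv_eq, smul_eq_C_mul, eval_mul, eval_C]

lemma eval_Phi (m : ℕ) (c : (Fin d → Fin (m+1)) → ℝ) (x : Fin d → ℝ) :
    eval x (Phi m c) = ∑ k, c k * eval x (monomial (toExp m k) 1) := by
  rw [Phi, map_sum (eval x)]
  refine Finset.sum_congr rfl fun k _ => ?_
  rw [eval_monomial, eval_monomial, one_mul]



open MeasureTheory

def Cube (σ : Fin d → ℝ) : Set (Fin d → ℝ) := Set.pi Set.univ fun j => Set.Ioo 0 (σ j)

def Box (ρ : Fin d → ℝ) : Set (Fin d → ℝ) := Set.pi Set.univ fun j => Set.Icc (-ρ j) (ρ j)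

lemma isOpen_cube (σ : Fin d → ℝ) : IsOpen (Cube σ) :=
  isOpen_set_pi Set.finite_univ fun _ _ => isOpen_Ioo

lemma isCompact_box (ρ : Fin d → ℝ) : IsCompact (Box ρ) :=
  isCompact_univ_pi fun _ => isCompact_Icc

lemma zero_on_cube {σ : Fin d → ℝ} (hσ : ∀ j, 0 < σ j) (f : MvPolynomial (Fin d) ℝ)
    (h : ∀ x ∈ Cube σ, eval x f = 0) : f = 0 := by
  have hA : AnalyticOnNhd ℝ (fun x : Fin d → ℝ => eval x f) Set.univ :=
    AnalyticOnNhd.eval_mvPolynomial f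
  have hz : (fun j => σ j / 2) ∈ Cube σ := by
    intro j _
    constructor
    · linarith [hσ j]
    · linarith [hσ j]
  have hev : (fun x : Fin d → ℝ => eval x f) =ᶠ[nhds (fun j => σ j / 2)] 0 := by
    filter_upwards [(isOpen_cube σ).mem_nhds hz] with x hx
    exact h x hx
  have hall := hA.eqOn_zero_of_preconnected_of_eventuallyEq_zero isPreconnected_univ
    (Set.mem_univ _) hev
  apply MvPolynomial.funext
  intro x
  simpa using hall (Set.mem_univ x)

lemma coeffs_eq_zero_of_lintegral_eq_zero {σ : Fin d → ℝ} (hσ : ∀ j, 0 < σ j) (m : ℕ)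
    (c : (Fin d → Fin (m+1)) → ℝ)
    (h : ∫⁻ x in Cube σ, (‖eval x (Phi m c)‖₊ : ENNReal) = 0) : c = 0 := by
  have hcont : Continuous fun x : Fin d → ℝ => eval x (Phi m c) :=
    MvPolynomial.continuous_eval _
  have hm : Measurable fun x : Fin d → ℝ => (‖eval x (Phi m c)‖₊ : ENNReal) :=
    hcont.nnnorm.measurable.coe_nnreal_ennreal
  rw [lintegral_eq_zero_iff hm] at h
  have h3 : ∀ᵐ x ∂(volume : Measure (Fin d → ℝ)),
      x ∈ Cube σ → (‖eval x (Phi m c)‖₊ : ENNReal) = 0 :=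
    (ae_restrict_iff' (isOpen_cube σ).measurableSet).1 h
  rw [ae_iff] at h3
  have h2 : ∀ x ∈ Cube σ, eval x (Phi m c) = 0 := by
    by_contra hc
    push_neg at hc
    obtain ⟨x, hx, hne⟩ := hc
    have hUopen : IsOpen (Cube σ ∩ {y | eval y (Phi m c) ≠ 0}) :=
      (isOpen_cube σ).inter (isOpen_compl_singleton.preimage hcont)
    have hsub : (Cube σ ∩ {y | eval y (Phi m c) ≠ 0})
        ⊆ {y | ¬(y ∈ Cube σ → (‖eval y (Phi m c)‖₊ : ENNReal) = 0)} := by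
      rintro y ⟨hy1, hy2⟩ hcontra
      exact hy2 (by simpa using hcontra hy1)
    have hU0 : volume (Cube σ ∩ {y | eval y (Phi m c) ≠ 0}) = 0 :=
      measure_mono_null hsub h3
    have hpos := hUopen.measure_pos (volume : Measure (Fin d → ℝ)) ⟨x, hx, hne⟩
    rw [hU0] at hpos
    exact lt_irrefl _ hpos
  have hPhi : Phi m c = 0 := zero_on_cube hσ _ h2
  funext k
  have := coeff_Phi m c k
  rw [hPhi] at this
  simpa using this.symm



lemma sup_bound (lam : Fin d → ℕ) (ρ : Fin d → ℝ) (m : ℕ) :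
    ∃ C₁ : ℝ, 0 < C₁ ∧ ∀ (c : (Fin d → Fin (m+1)) → ℝ) (x : Fin d → ℝ), x ∈ Box ρ →
      |eval x (mvDeriv lam (Phi m c))| ≤ C₁ * ‖c‖ := by
  have hb : ∀ k : Fin d → Fin (m+1), ∃ b : ℝ, ∀ x ∈ Box ρ,
      |eval x (mvDeriv lam (monomial (toExp m k) 1))| ≤ b := by
    intro k
    obtain ⟨b, hbb⟩ := (isCompact_box ρ).exists_bound_of_continuousOn
      ((MvPolynomial.continuous_eval (mvDeriv lam (monomial (toExp m k) 1))).continuousOn)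
    exact ⟨b, fun x hx => by simpa [Real.norm_eq_abs] using hbb x hx⟩
  choose b hb using hb
  refine ⟨1 + ∑ k, |b k|, by positivity, fun c x hx => ?_⟩
  rw [eval_mvDeriv_Phi]
  calc |∑ k, c k * eval x (mvDeriv lam (monomial (toExp m k) 1))|
      ≤ ∑ k, |c k * eval x (mvDeriv lam (monomial (toExp m k) 1))| :=
        Finset.abs_sum_le_sum_abs _ _
    _ ≤ ∑ k, ‖c‖ * |b k| := by
        refine Finset.sum_le_sum fun k _ => ?_
        rw [abs_mul]
        have h1 : |c k| ≤ ‖c‖ := by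
          rw [← Real.norm_eq_abs]; exact norm_le_pi_norm c k
        exact mul_le_mul h1 ((hb k x hx).trans (le_abs_self _)) (abs_nonneg _) (norm_nonneg _)
    _ = (∑ k, |b k|) * ‖c‖ := by rw [← Finset.mul_sum]; ring
    _ ≤ (1 + ∑ k, |b k|) * ‖c‖ := by
        have : (0:ℝ) ≤ ‖c‖ := norm_nonneg _
        nlinarith

lemma I_smul {σ : Fin d → ℝ} (m : ℕ) (a : ℝ) (u : (Fin d → Fin (m+1)) → ℝ) :
    ∫⁻ x in Cube σ, (‖eval x (Phi m (a • u))‖₊ : ENNReal)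
      = ENNReal.ofReal |a| * ∫⁻ x in Cube σ, (‖eval x (Phi m u)‖₊ : ENNReal) := by
  have h1 : ∀ x : Fin d → ℝ, (‖eval x (Phi m (a • u))‖₊ : ENNReal)
      = ENNReal.ofReal |a| * (‖eval x (Phi m u)‖₊ : ENNReal) := by
    intro x
    rw [Phi_smul, smul_eq_C_mul, eval_mul, eval_C, nnnorm_mul, ENNReal.coe_mul]
    congr 1
    rw [← enorm_eq_nnnorm, ← ofReal_norm, Real.norm_eq_abs]
  simp_rw [h1]
  rw [lintegral_const_mul' _ _ ENNReal.ofReal_ne_top]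

lemma eps_bound {σ : Fin d → ℝ} (hσ : ∀ j, 0 < σ j) (m : ℕ) :
    ∃ ε : ℝ, 0 < ε ∧ ∀ c : (Fin d → Fin (m+1)) → ℝ,
      ENNReal.ofReal (ε * ‖c‖) ≤ ∫⁻ x in Cube σ, (‖eval x (Phi m c)‖₊ : ENNReal) := by
  set I : ((Fin d → Fin (m+1)) → ℝ) → ENNReal :=
    fun c => ∫⁻ x in Cube σ, (‖eval x (Phi m c)‖₊ : ENNReal) with hI
  have step1 : ∃ ε : ℝ, 0 < ε ∧ ∀ c, ‖c‖ = 1 → ENNReal.ofReal ε ≤ I c := by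
    by_contra hcon
    push_neg at hcon
    have hseq : ∀ n : ℕ, ∃ c, ‖c‖ = 1 ∧ I c < ENNReal.ofReal (1 / (n+1)) := by
      intro n
      obtain ⟨c, hc1, hc2⟩ := hcon (1/(n+1)) (by positivity)
      exact ⟨c, hc1, hc2⟩
    choose u hu1 hu2 using hseq
    have hmem : ∀ n, u n ∈ Metric.sphere (0 : (Fin d → Fin (m+1)) → ℝ) 1 := by
      intro n; rw [mem_sphere_zero_iff_norm]; exact hu1 n
    obtain ⟨cstar, hcstar, φ, hφ, hconv⟩ :=
      (isCompact_sphere (0 : (Fin d → Fin (m+1)) → ℝ) 1).tendsto_subseq hmem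
    have hpt : ∀ x : Fin d → ℝ,
        Filter.Tendsto (fun n => (‖eval x (Phi m (u (φ n)))‖₊ : ENNReal))
          Filter.atTop (nhds (‖eval x (Phi m cstar)‖₊ : ENNReal)) := by
      intro x
      have hcont : Continuous fun c : (Fin d → Fin (m+1)) → ℝ => eval x (Phi m c) := by
        simp only [eval_Phi]
        exact continuous_finset_sum _ fun k _ => ((continuous_apply k).mul continuous_const)
      exact ENNReal.tendsto_coe.2 ((hcont.tendsto cstar).comp hconv).nnnorm
    have hIle : I cstar ≤ Filter.liminf (fun n => I (u (φ n))) Filter.atTop := by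
      have hfatou := lintegral_liminf_le (u := Filter.atTop) (μ := (volume : Measure (Fin d → ℝ)).restrict (Cube σ))
        (f := fun n x => (‖eval x (Phi m (u (φ n)))‖₊ : ENNReal))
        (fun n => (MvPolynomial.continuous_eval
          (Phi m (u (φ n)))).nnnorm.measurable.coe_nnreal_ennreal)
      refine le_trans (le_of_eq ?_) hfatou
      refine lintegral_congr fun x => ?_
      exact ((hpt x).liminf_eq).symm
    have hlim0 : Filter.Tendsto (fun n => I (u (φ n))) Filter.atTop (nhds 0) := by
      have hle : ∀ n, I (u (φ n)) ≤ ENNReal.ofReal (1/(n+1)) := by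
        intro n
        refine le_trans (hu2 (φ n)).le (ENNReal.ofReal_le_ofReal ?_)
        have h : n ≤ φ n := hφ.le_apply
        have h1 : (0:ℝ) < n + 1 := by positivity
        have h2 : (n:ℝ) + 1 ≤ (φ n : ℝ) + 1 := by
          have : (n:ℝ) ≤ φ n := by exact_mod_cast h
          linarith
        rw [div_le_div_iff₀ (by positivity) h1]
        nlinarith
      have hz : Filter.Tendsto (fun n : ℕ => ENNReal.ofReal (1/(n+1))) Filter.atTop (nhds 0) := by
        have h0 : Filter.Tendsto (fun n : ℕ => (1:ℝ)/(n+1)) Filter.atTop (nhds 0) :=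
          tendsto_one_div_add_atTop_nhds_zero_nat
        simpa [ENNReal.ofReal_zero] using ENNReal.tendsto_ofReal h0
      exact tendsto_of_tendsto_of_tendsto_of_le_of_le tendsto_const_nhds hz
        (fun n => zero_le) hle
    have hI0 : I cstar = 0 := le_antisymm (hIle.trans_eq hlim0.liminf_eq) zero_le
    have hc0 := coeffs_eq_zero_of_lintegral_eq_zero hσ m cstar hI0
    rw [mem_sphere_zero_iff_norm, hc0] at hcstar
    simp at hcstar
  obtain ⟨ε, hε, hsphere⟩ := step1
  refine ⟨ε, hε, fun c => ?_⟩
  show ENNReal.ofReal (ε * ‖c‖) ≤ I c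
  rcases eq_or_ne c 0 with rfl | hc
  · simp
  · have hnorm : (0:ℝ) < ‖c‖ := norm_pos_iff.2 hc
    set v := ‖c‖⁻¹ • c with hv
    have hv1 : ‖v‖ = 1 := by
      rw [hv, norm_smul, Real.norm_eq_abs, abs_of_nonneg (by positivity)]
      field_simp
    have hcv : c = ‖c‖ • v := by
      rw [hv, smul_smul]
      rw [mul_inv_cancel₀ hnorm.ne']
      simp
    have hkey : I c = ENNReal.ofReal ‖c‖ * I v := by
      conv_lhs => rw [hcv]
      rw [hI]
      simpa [abs_of_nonneg hnorm.le] using I_smul m ‖c‖ v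
    rw [hkey, ENNReal.ofReal_mul hε.le, mul_comm (ENNReal.ofReal ε)]
    exact mul_le_mul_right (hsphere v hv1) _



lemma core (lam : Fin d → ℕ) (ρ σ : Fin d → ℝ) (hρ : ∀ j, 0 < ρ j) (hσ : ∀ j, 0 < σ j)
    (p q : ENNReal) (hp : 1 ≤ p) (m : ℕ) :
    ∃ C₀ : ℝ, 0 < C₀ ∧ ∀ (A : Set (Fin d → ℝ)), MeasurableSet A → A ⊆ Box ρ →
      ∀ g : MvPolynomial (Fin d) ℝ, (∀ j, degreeOf j g ≤ m) →
      eLpNorm (fun x => eval x (mvDeriv lam g)) q (volume.restrict A)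
        ≤ ENNReal.ofReal C₀ * eLpNorm (fun x => eval x g) p (volume.restrict (Cube σ)) := by
  obtain ⟨C₁, hC₁, hsup⟩ := sup_bound lam ρ m
  obtain ⟨ε, hε, heps⟩ := eps_bound hσ m
  set Vρ : ℝ := ∏ j, (2 * ρ j) with hVρ
  set Vσ : ℝ := ∏ j, σ j with hVσ
  have hVρpos : 0 < Vρ := Finset.prod_pos fun j _ => by linarith [hρ j]
  have hVσpos : 0 < Vσ := Finset.prod_pos fun j _ => hσ j
  refine ⟨Vρ ^ q.toReal⁻¹ * (C₁ / ε) * Vσ ^ (1 - p.toReal⁻¹), by positivity, ?_⟩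
  intro A hAm hAsub g hg
  set c : (Fin d → Fin (m+1)) → ℝ := fun k => coeff (toExp m k) g with hc
  have hgc : Phi m c = g := Phi_repr m g hg
  have h1 : eLpNorm (fun x => eval x (mvDeriv lam g)) q (volume.restrict A)
      ≤ (volume A) ^ q.toReal⁻¹ * ENNReal.ofReal (C₁ * ‖c‖) := by
    have hb : ∀ᵐ x ∂(volume.restrict A), ‖eval x (mvDeriv lam g)‖ ≤ C₁ * ‖c‖ := by
      filter_upwards [ae_restrict_mem hAm] with x hx
      rw [Real.norm_eq_abs, ← hgc]
      exact hsup c x (hAsub hx)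
    have hthis := eLpNorm_le_of_ae_bound (p := q) hb
    rwa [Measure.restrict_apply_univ] at hthis
  have hvolA : volume A ≤ ENNReal.ofReal Vρ := by
    refine le_trans (measure_mono hAsub) (le_of_eq ?_)
    rw [Box, volume_pi_pi]
    have hIcc : ∀ j : Fin d, volume (Set.Icc (-ρ j) (ρ j)) = ENNReal.ofReal (2 * ρ j) := by
      intro j; rw [Real.volume_Icc]; congr 1; ring
    rw [Finset.prod_congr rfl (fun j _ => hIcc j),
      ← ENNReal.ofReal_prod_of_nonneg (fun j _ => by linarith [hρ j])]
  have h2 : ENNReal.ofReal (C₁ * ‖c‖) ≤ ENNReal.ofReal (C₁/ε) *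
      eLpNorm (fun x => eval x g) 1 (volume.restrict (Cube σ)) := by
    have hL1 : eLpNorm (fun x => eval x g) 1 (volume.restrict (Cube σ))
        = ∫⁻ x in Cube σ, (‖eval x g‖₊ : ENNReal) := eLpNorm_one_eq_lintegral_enorm
    rw [hL1, ← hgc]
    calc ENNReal.ofReal (C₁ * ‖c‖) = ENNReal.ofReal (C₁/ε) * ENNReal.ofReal (ε * ‖c‖) := by
          rw [← ENNReal.ofReal_mul (by positivity)]
          congr 1
          field_simp
      _ ≤ _ := mul_le_mul_right (heps c) _
  have hcv : volume (Cube σ) = ENNReal.ofReal Vσ := by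
    rw [Cube, volume_pi_pi]
    simp_rw [Real.volume_Ioo]
    rw [← ENNReal.ofReal_prod_of_nonneg (fun j _ => by linarith [hσ j])]
    simp [hVσ]
  have h3 : eLpNorm (fun x => eval x g) 1 (volume.restrict (Cube σ))
      ≤ eLpNorm (fun x => eval x g) p (volume.restrict (Cube σ))
          * ENNReal.ofReal (Vσ ^ (1 - p.toReal⁻¹)) := by
    have hmono := eLpNorm_le_eLpNorm_mul_rpow_measure_univ (p := 1) (q := p)
      (μ := volume.restrict (Cube σ)) hp
      ((MvPolynomial.continuous_eval g).aestronglyMeasurable)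
    have hexp : 1/(1:ENNReal).toReal - 1/p.toReal = 1 - p.toReal⁻¹ := by
      simp [one_div]
    rw [hexp] at hmono
    refine hmono.trans (le_of_eq ?_)
    congr 1
    rw [Measure.restrict_apply_univ, hcv, ENNReal.ofReal_rpow_of_pos hVσpos]
  calc eLpNorm (fun x => eval x (mvDeriv lam g)) q (volume.restrict A)
      ≤ (volume A) ^ q.toReal⁻¹ * ENNReal.ofReal (C₁ * ‖c‖) := h1
    _ ≤ (ENNReal.ofReal Vρ) ^ q.toReal⁻¹ * (ENNReal.ofReal (C₁/ε)
          * (eLpNorm (fun x => eval x g) p (volume.restrict (Cube σ))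
              * ENNReal.ofReal (Vσ ^ (1 - p.toReal⁻¹)))) := by
        refine mul_le_mul' (ENNReal.rpow_le_rpow hvolA (by positivity)) ?_
        exact h2.trans (mul_le_mul_right h3 _)
    _ = ENNReal.ofReal (Vρ ^ q.toReal⁻¹ * (C₁ / ε) * Vσ ^ (1 - p.toReal⁻¹))
          * eLpNorm (fun x => eval x g) p (volume.restrict (Cube σ)) := by
        rw [ENNReal.ofReal_rpow_of_pos hVρpos,
          ENNReal.ofReal_mul (by positivity), ENNReal.ofReal_mul (by positivity)]
        ring



lemma map_T_volume (x₀ δ : Fin d → ℝ) (hδ : ∀ j, 0 < δ j) :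
    Measure.map (fun y : Fin d → ℝ => fun j => x₀ j + δ j * y j) volume
      = ENNReal.ofReal (∏ j, δ j)⁻¹ • volume := by
  have hPδ : (0:ℝ) < ∏ j, δ j := Finset.prod_pos fun j _ => hδ j
  set L := Matrix.toLin' (Matrix.diagonal δ) with hL
  have hLapp : ∀ y : Fin d → ℝ, L y = fun j => δ j * y j := by
    intro y
    funext j
    rw [hL, Matrix.toLin'_apply, Matrix.mulVec_diagonal]
  have hdet : LinearMap.det (L : (Fin d → ℝ) →ₗ[ℝ] (Fin d → ℝ)) = ∏ j, δ j := by
    rw [hL, LinearMap.det_toLin', Matrix.det_diagonal]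
  have hT : (fun y : Fin d → ℝ => fun j => x₀ j + δ j * y j)
      = (fun v : Fin d → ℝ => x₀ + v) ∘ (L : (Fin d → ℝ) →ₗ[ℝ] (Fin d → ℝ)) := by
    funext y
    simp only [Function.comp_apply, hLapp]
    funext j
    simp
  rw [hT, ← Measure.map_map (by fun_prop) (L.continuous_of_finiteDimensional.measurable)]
  rw [Measure.map_linearMap_addHaar_eq_smul_addHaar volume (by rw [hdet]; exact hPδ.ne')]
  rw [Measure.map_smul]
  rw [Measure.IsAddLeftInvariant.map_add_left_eq_self (μ := (volume : Measure (Fin d → ℝ))) x₀]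
  rw [hdet, abs_of_pos (by positivity)]

lemma restrict_eq_smul_map (x₀ δ : Fin d → ℝ) (hδ : ∀ j, 0 < δ j) (S : Set (Fin d → ℝ))
    (hS : MeasurableSet S) :
    volume.restrict S = ENNReal.ofReal (∏ j, δ j) •
      Measure.map (fun y : Fin d → ℝ => fun j => x₀ j + δ j * y j)
        (volume.restrict ((fun y : Fin d → ℝ => fun j => x₀ j + δ j * y j) ⁻¹' S)) := by
  have hPδ : (0:ℝ) < ∏ j, δ j := Finset.prod_pos fun j _ => hδ j
  have hTm : Measurable (fun y : Fin d → ℝ => fun j => x₀ j + δ j * y j) := by fun_prop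
  rw [← Measure.restrict_map hTm hS, map_T_volume x₀ δ hδ, Measure.restrict_smul, smul_smul,
    ← ENNReal.ofReal_mul (by positivity), mul_inv_cancel₀ hPδ.ne', ENNReal.ofReal_one, one_smul]

lemma eLpNorm_transform (x₀ δ : Fin d → ℝ) (hδ : ∀ j, 0 < δ j) (r : ENNReal)
    (S : Set (Fin d → ℝ)) (hS : MeasurableSet S) (F : (Fin d → ℝ) → ℝ) (hF : Continuous F) :
    eLpNorm F r (volume.restrict S)
      = ENNReal.ofReal (∏ j, δ j) ^ r.toReal⁻¹
          * eLpNorm (F ∘ (fun y : Fin d → ℝ => fun j => x₀ j + δ j * y j)) r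
              (volume.restrict ((fun y : Fin d → ℝ => fun j => x₀ j + δ j * y j) ⁻¹' S)) := by
  have hPδ : (0:ℝ) < ∏ j, δ j := Finset.prod_pos fun j _ => hδ j
  have hTm : Measurable (fun y : Fin d → ℝ => fun j => x₀ j + δ j * y j) := by fun_prop
  rw [restrict_eq_smul_map x₀ δ hδ S hS,
    eLpNorm_smul_measure_of_ne_zero (by simp [hPδ, ENNReal.ofReal_eq_zero] : ENNReal.ofReal (∏ j, δ j) ≠ 0),
    eLpNorm_map_measure hF.aestronglyMeasurable hTm.aemeasurable]
  rw [smul_eq_mul, one_div, ENNReal.toReal_inv]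



lemma const_eq (δ : Fin d → ℝ) (hδ : ∀ j, 0 < δ j) (lam : Fin d → ℕ) (a b : ℝ) :
    (∏ j, δ j) ^ b * (∏ j, δ j ^ lam j)⁻¹
      = (∏ j, δ j ^ (-(lam j : ℝ) - a + b)) * (∏ j, δ j) ^ a := by
  rw [← Real.finset_prod_rpow _ _ (fun j _ => (hδ j).le) b,
      ← Real.finset_prod_rpow _ _ (fun j _ => (hδ j).le) a,
      ← Finset.prod_inv_distrib, ← Finset.prod_mul_distrib, ← Finset.prod_mul_distrib]
  refine Finset.prod_congr rfl fun j _ => ?_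
  rw [← Real.rpow_natCast (δ j) (lam j), ← Real.rpow_neg (hδ j).le, ← Real.rpow_add (hδ j),
    ← Real.rpow_add (hδ j)]
  congr 1
  ring

end BMaux

open MeasureTheory in
/-- Lemma 1.1.2 (inequality (1.1.1)): a Bernstein–Markov-type inequality for polynomials
of componentwise degree at most `l` on comparable boxes. -/
theorem stmt_11 (d : ℕ) (hd : 0 < d) (l lam : Fin d → ℕ) (hlam : ∀ j, lam j ≤ l j)
    (p q : ENNReal) (hp : 1 ≤ p) (hq : 1 ≤ q) (ρ σ : Fin d → ℝ)
    (hρ : ∀ j, 0 < ρ j) (hσ : ∀ j, 0 < σ j) :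
    ∃ c : ℝ, 0 < c ∧
      ∀ (D Q : Set (Fin d → ℝ)), MeasurableSet D → MeasurableSet Q →
      ∀ (δ : Fin d → ℝ) (x₀ : Fin d → ℝ), (∀ j, 0 < δ j) →
      (∀ x ∈ D, ∀ j, |x j - x₀ j| ≤ ρ j * δ j) →
      ({x : Fin d → ℝ | ∀ j, x j ∈ Set.Ioo (x₀ j) (x₀ j + σ j * δ j)} ⊆ Q) →
      ∀ f : MvPolynomial (Fin d) ℝ, (∀ j, f.degreeOf j ≤ l j) →
      eLpNorm (fun x => MvPolynomial.eval x (mvDeriv lam f)) q (volume.restrict D) ≤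
        ENNReal.ofReal
            (c * ∏ j, δ j ^ (-(lam j : ℝ) - (p.toReal)⁻¹ + (q.toReal)⁻¹)) *
          eLpNorm (fun x => MvPolynomial.eval x f) p (volume.restrict Q) := by
  classical
  obtain ⟨C₀, hC₀, hcore⟩ := BMaux.core lam ρ σ hρ hσ p q hp (∑ j, l j)
  refine ⟨C₀, hC₀, ?_⟩
  intro D Q hD hQ δ x₀ hδ hDsub hQsub f hf
  have hPδ : (0:ℝ) < ∏ j, δ j := Finset.prod_pos fun j _ => hδ j
  have hclpos : (0:ℝ) < ∏ j, δ j ^ lam j := Finset.prod_pos fun j _ => pow_pos (hδ j) _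
  set g : MvPolynomial (Fin d) ℝ := MvPolynomial.aeval (BMaux.aff x₀ δ) f with hg
  have hdegg : ∀ j, g.degreeOf j ≤ ∑ j, l j := by
    intro j
    refine le_trans (BMaux.degreeOf_aeval_aff_le x₀ δ j f) (le_trans (hf j) ?_)
    exact Finset.single_le_sum (f := fun j => l j) (fun i _ => Nat.zero_le _) (Finset.mem_univ j)
  have hSpi : {x : Fin d → ℝ | ∀ j, x j ∈ Set.Ioo (x₀ j) (x₀ j + σ j * δ j)}
      = Set.pi Set.univ fun j => Set.Ioo (x₀ j) (x₀ j + σ j * δ j) := by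
    ext x; simp [Set.mem_pi]
  have hSm : MeasurableSet {x : Fin d → ℝ | ∀ j, x j ∈ Set.Ioo (x₀ j) (x₀ j + σ j * δ j)} := by
    rw [hSpi]; exact MeasurableSet.univ_pi fun j => measurableSet_Ioo
  have hTS : (fun y : Fin d → ℝ => fun j => x₀ j + δ j * y j) ⁻¹'
        {x : Fin d → ℝ | ∀ j, x j ∈ Set.Ioo (x₀ j) (x₀ j + σ j * δ j)} = BMaux.Cube σ := by
    ext y
    simp only [Set.mem_preimage, Set.mem_setOf_eq, BMaux.Cube, Set.mem_pi, Set.mem_univ,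
      forall_true_left, Set.mem_Ioo]
    refine forall_congr' fun j => ?_
    constructor
    · rintro ⟨h1, h2⟩
      exact ⟨by nlinarith [hδ j], by nlinarith [hδ j]⟩
    · rintro ⟨h1, h2⟩
      exact ⟨by nlinarith [hδ j], by nlinarith [hδ j]⟩
  have hTD : (fun y : Fin d → ℝ => fun j => x₀ j + δ j * y j) ⁻¹' D ⊆ BMaux.Box ρ := by
    intro y hy j _
    have h := hDsub _ hy j
    have h1 : |δ j * y j| ≤ ρ j * δ j := by
      simpa using h
    rw [abs_mul, abs_of_pos (hδ j)] at h1
    have h2 : δ j * |y j| ≤ δ j * ρ j := by linarith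
    have hy' : |y j| ≤ ρ j := le_of_mul_le_mul_left h2 (hδ j)
    exact ⟨neg_le_of_abs_le hy', le_of_abs_le hy'⟩
  have hTDm : MeasurableSet ((fun y : Fin d → ℝ => fun j => x₀ j + δ j * y j) ⁻¹' D) :=
    hD.preimage (by fun_prop)
  have hFcont : Continuous fun x : Fin d → ℝ => MvPolynomial.eval x (mvDeriv lam f) :=
    MvPolynomial.continuous_eval _
  have hF0cont : Continuous fun x : Fin d → ℝ => MvPolynomial.eval x f :=
    MvPolynomial.continuous_eval _
  have hLHS := BMaux.eLpNorm_transform x₀ δ hδ q D hD _ hFcont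
  have hRHS := BMaux.eLpNorm_transform x₀ δ hδ p _ hSm _ hF0cont
  have hcomp1 : (fun y => MvPolynomial.eval y (mvDeriv lam g))
      = fun y => (∏ j, δ j ^ lam j) *
          ((fun x => MvPolynomial.eval x (mvDeriv lam f))
            ∘ (fun y : Fin d → ℝ => fun j => x₀ j + δ j * y j)) y := by
    funext y
    rw [hg, BMaux.mvDeriv_aeval_aff, MvPolynomial.eval_mul, MvPolynomial.eval_C,
      BMaux.eval_aeval_aff]
    rfl
  have hcomp2 : ((fun x => MvPolynomial.eval x f)
        ∘ (fun y : Fin d → ℝ => fun j => x₀ j + δ j * y j))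
      = fun y => MvPolynomial.eval y g := by
    funext y
    rw [hg, BMaux.eval_aeval_aff]
    rfl
  set N₂ := eLpNorm (fun y => MvPolynomial.eval y g) p (volume.restrict (BMaux.Cube σ)) with hN₂
  have hmulstep : ENNReal.ofReal (∏ j, δ j ^ lam j) *
      eLpNorm ((fun x => MvPolynomial.eval x (mvDeriv lam f))
          ∘ (fun y : Fin d → ℝ => fun j => x₀ j + δ j * y j)) q
        (volume.restrict ((fun y : Fin d → ℝ => fun j => x₀ j + δ j * y j) ⁻¹' D))
      = eLpNorm (fun y => MvPolynomial.eval y (mvDeriv lam g)) q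
          (volume.restrict ((fun y : Fin d → ℝ => fun j => x₀ j + δ j * y j) ⁻¹' D)) := by
    rw [hcomp1]
    have hsm : (fun y => (∏ j, δ j ^ lam j) *
        ((fun x => MvPolynomial.eval x (mvDeriv lam f))
          ∘ (fun y : Fin d → ℝ => fun j => x₀ j + δ j * y j)) y)
        = (∏ j, δ j ^ lam j) • ((fun x => MvPolynomial.eval x (mvDeriv lam f))
          ∘ (fun y : Fin d → ℝ => fun j => x₀ j + δ j * y j)) := rfl
    rw [hsm, eLpNorm_const_smul]
    congr 1
    rw [← ofReal_norm, Real.norm_eq_abs, abs_of_pos hclpos]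
  have hcoreapp := hcore _ hTDm hTD g hdegg
  have hstep2 : eLpNorm ((fun x => MvPolynomial.eval x (mvDeriv lam f))
        ∘ (fun y : Fin d → ℝ => fun j => x₀ j + δ j * y j)) q
        (volume.restrict ((fun y : Fin d → ℝ => fun j => x₀ j + δ j * y j) ⁻¹' D))
      ≤ (ENNReal.ofReal (∏ j, δ j ^ lam j))⁻¹ * (ENNReal.ofReal C₀ * N₂) := by
    have h := hcoreapp
    rw [← hmulstep] at h
    have hne0 : ENNReal.ofReal (∏ j, δ j ^ lam j) ≠ 0 := by
      simp [ENNReal.ofReal_eq_zero, hclpos, not_le]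
    calc eLpNorm ((fun x => MvPolynomial.eval x (mvDeriv lam f))
          ∘ (fun y : Fin d → ℝ => fun j => x₀ j + δ j * y j)) q
          (volume.restrict ((fun y : Fin d → ℝ => fun j => x₀ j + δ j * y j) ⁻¹' D))
        = (ENNReal.ofReal (∏ j, δ j ^ lam j))⁻¹ * (ENNReal.ofReal (∏ j, δ j ^ lam j) *
            eLpNorm ((fun x => MvPolynomial.eval x (mvDeriv lam f))
              ∘ (fun y : Fin d → ℝ => fun j => x₀ j + δ j * y j)) q
              (volume.restrict ((fun y : Fin d → ℝ => fun j => x₀ j + δ j * y j) ⁻¹' D))) := by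
          rw [← mul_assoc, ENNReal.inv_mul_cancel hne0 ENNReal.ofReal_ne_top, one_mul]
      _ ≤ _ := mul_le_mul_right h _
  have hQle : ENNReal.ofReal (∏ j, δ j) ^ p.toReal⁻¹ * N₂
      ≤ eLpNorm (fun x => MvPolynomial.eval x f) p (volume.restrict Q) := by
    have heq : eLpNorm (fun x => MvPolynomial.eval x f) p
        (volume.restrict {x : Fin d → ℝ | ∀ j, x j ∈ Set.Ioo (x₀ j) (x₀ j + σ j * δ j)})
        = ENNReal.ofReal (∏ j, δ j) ^ p.toReal⁻¹ * N₂ := by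
      rw [hRHS, hTS, hcomp2]
    rw [← heq]
    exact eLpNorm_mono_measure _ (Measure.restrict_mono hQsub le_rfl)
  calc eLpNorm (fun x => MvPolynomial.eval x (mvDeriv lam f)) q (volume.restrict D)
      = ENNReal.ofReal (∏ j, δ j) ^ q.toReal⁻¹ *
          eLpNorm ((fun x => MvPolynomial.eval x (mvDeriv lam f))
            ∘ (fun y : Fin d → ℝ => fun j => x₀ j + δ j * y j)) q
            (volume.restrict ((fun y : Fin d → ℝ => fun j => x₀ j + δ j * y j) ⁻¹' D)) := hLHS
    _ ≤ ENNReal.ofReal (∏ j, δ j) ^ q.toReal⁻¹ *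
          ((ENNReal.ofReal (∏ j, δ j ^ lam j))⁻¹ * (ENNReal.ofReal C₀ * N₂)) :=
        mul_le_mul_right hstep2 _
    _ = ENNReal.ofReal (C₀ * ∏ j, δ j ^ (-(lam j : ℝ) - (p.toReal)⁻¹ + (q.toReal)⁻¹)) *
          (ENNReal.ofReal (∏ j, δ j) ^ p.toReal⁻¹ * N₂) := by
        have hμpos : (0:ℝ) < ∏ j, δ j ^ (-(lam j : ℝ) - (p.toReal)⁻¹ + (q.toReal)⁻¹) :=
          Finset.prod_pos fun j _ => Real.rpow_pos_of_pos (hδ j) _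
        rw [ENNReal.ofReal_rpow_of_pos hPδ, ENNReal.ofReal_rpow_of_pos hPδ,
          ← ENNReal.ofReal_inv_of_pos hclpos]
        have e1 : ENNReal.ofReal ((∏ j, δ j) ^ q.toReal⁻¹) *
            (ENNReal.ofReal (∏ j, δ j ^ lam j)⁻¹ * (ENNReal.ofReal C₀ * N₂))
            = ENNReal.ofReal ((∏ j, δ j) ^ q.toReal⁻¹ * (∏ j, δ j ^ lam j)⁻¹ * C₀) * N₂ := by
          rw [ENNReal.ofReal_mul (mul_nonneg (Real.rpow_nonneg hPδ.le _)
              (inv_nonneg.2 hclpos.le)),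
            ENNReal.ofReal_mul (Real.rpow_nonneg hPδ.le _)]
          ring
        have e2 : ENNReal.ofReal (C₀ * ∏ j, δ j ^ (-(lam j : ℝ) - (p.toReal)⁻¹ + (q.toReal)⁻¹)) *
            (ENNReal.ofReal ((∏ j, δ j) ^ p.toReal⁻¹) * N₂)
            = ENNReal.ofReal (C₀ * (∏ j, δ j ^ (-(lam j : ℝ) - (p.toReal)⁻¹ + (q.toReal)⁻¹))
                * (∏ j, δ j) ^ p.toReal⁻¹) * N₂ := by
          rw [ENNReal.ofReal_mul (mul_nonneg hC₀.le hμpos.le)]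
          ring
        rw [e1, e2]
        congr 2
        have h := BMaux.const_eq δ hδ lam p.toReal⁻¹ q.toReal⁻¹
        calc (∏ j, δ j) ^ q.toReal⁻¹ * (∏ j, δ j ^ lam j)⁻¹ * C₀
            = ((∏ j, δ j) ^ q.toReal⁻¹ * (∏ j, δ j ^ lam j)⁻¹) * C₀ := by ring
          _ = ((∏ j, δ j ^ (-(lam j : ℝ) - p.toReal⁻¹ + q.toReal⁻¹)) * (∏ j, δ j) ^ p.toReal⁻¹)
                * C₀ := by rw [h]
          _ = C₀ * (∏ j, δ j ^ (-(lam j : ℝ) - (p.toReal)⁻¹ + (q.toReal)⁻¹))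
                * (∏ j, δ j) ^ p.toReal⁻¹ := by ring
    _ ≤ _ := mul_le_mul_right hQle _
end

section
/- Let d ∈ ℕ. For each j = 1,...,d and each bounded linear operator T : C([0,1]) → C([0,1]), there exists a unique bounded linear operator 𝒯^j : C([0,1]^d) → C([0,1]^d) such that for every f ∈ C([0,1]^d), all choices of the other coordinates, and every x_j ∈ [0,1], (𝒯^j f)(x_1,...,x_d) = (T(f(x_1,...,x_{j-1},·,x_{j+1},...,x_d)))(x_j). The map V_j : T ↦ 𝒯^j is a continuous Banach algebra homomorphism from ℬ(C([0,1])) to ℬ(C([0,1]^d)), and V_i(S) ∘ V_j(T) = V_j(T) ∘ V_i(S) whenever i ≠ j. -/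
noncomputable section
open ContinuousMap

abbrev II := Set.Icc (0:ℝ) 1
abbrev Cube (d : ℕ) := Fin d → II

/-- The `j`-th slice through `x` of a continuous function on the cube `[0,1]^d`,
as a continuous function on `[0,1]`. -/
def sliceCM (d : ℕ) (j : Fin d) (x : Fin d → Set.Icc (0 : ℝ) 1)
    (f : C((Fin d → Set.Icc (0 : ℝ) 1), ℝ)) : C(Set.Icc (0 : ℝ) 1, ℝ) :=
  f.comp ⟨fun t => Function.update x j t, (continuous_const.update j continuous_id)⟩

/-- The statement that `𝒯 : C([0,1]^d) → C([0,1]^d)` acts as `T : C([0,1]) → C([0,1])`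
in the `j`-th variable. -/
def ActsInCoordC (d : ℕ) (j : Fin d)
    (T : C(Set.Icc (0 : ℝ) 1, ℝ) →L[ℝ] C(Set.Icc (0 : ℝ) 1, ℝ))
    (𝒯 : C((Fin d → Set.Icc (0 : ℝ) 1), ℝ) →L[ℝ] C((Fin d → Set.Icc (0 : ℝ) 1), ℝ)) :
    Prop :=
  ∀ (f : C((Fin d → Set.Icc (0 : ℝ) 1), ℝ)) (x : Fin d → Set.Icc (0 : ℝ) 1),
    (𝒯 f) x = (T (sliceCM d j x f)) (x j)

variable {d : ℕ}

/-- the update map as a continuous map on the product -/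
def updCM (d : ℕ) (j : Fin d) : C(Cube d × II, Cube d) :=
  ⟨fun p => Function.update p.1 j p.2, by
    apply continuous_pi
    intro k
    by_cases h : k = j
    · subst h; simpa [Function.update_apply] using continuous_snd
    · simpa [Function.update_apply, h, Function.comp_def] using continuous_apply k |>.comp continuous_fst⟩

lemma slice_continuous (j : Fin d) (f : C(Cube d, ℝ)) :
    Continuous (fun x => sliceCM d j x f) := by
  have : (fun x => sliceCM d j x f) = fun x => f.comp ((updCM d j).curry x) := by
    funext x; ext t; rfl
  rw [this]
  exact (ContinuousMap.continuous_postcomp f).comp (ContinuousMap.curry (updCM d j)).continuous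

lemma norm_slice_le (j : Fin d) (x : Cube d) (f : C(Cube d, ℝ)) :
    ‖sliceCM d j x f‖ ≤ ‖f‖ := by
  apply ContinuousMap.norm_le _ (norm_nonneg f) |>.2
  intro t
  exact f.norm_coe_le_norm _

/-- the underlying continuous map of `V j T f` -/
def VfunCM (j : Fin d) (T : C(II, ℝ) →L[ℝ] C(II, ℝ)) (f : C(Cube d, ℝ)) : C(Cube d, ℝ) :=
  ⟨fun x => T (sliceCM d j x f) (x j), by
    have h1 : Continuous fun x : Cube d => (T (sliceCM d j x f), x j) :=
      ((T.continuous.comp (slice_continuous j f)).prodMk (continuous_apply j))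
    exact ContinuousEval.continuous_eval.comp h1⟩

lemma VfunCM_norm_le (j : Fin d) (T : C(II, ℝ) →L[ℝ] C(II, ℝ)) (f : C(Cube d, ℝ)) :
    ‖VfunCM j T f‖ ≤ ‖T‖ * ‖f‖ := by
  apply ContinuousMap.norm_le _ (by positivity) |>.2
  intro x
  calc ‖T (sliceCM d j x f) (x j)‖ ≤ ‖T (sliceCM d j x f)‖ :=
        (T (sliceCM d j x f)).norm_coe_le_norm _
    _ ≤ ‖T‖ * ‖sliceCM d j x f‖ := T.le_opNorm _
    _ ≤ ‖T‖ * ‖f‖ := mul_le_mul_of_nonneg_left (norm_slice_le j x f) (norm_nonneg T)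

/-- `V j T` as a continuous linear map -/
def Vclm (j : Fin d) (T : C(II, ℝ) →L[ℝ] C(II, ℝ)) : C(Cube d, ℝ) →L[ℝ] C(Cube d, ℝ) :=
  LinearMap.mkContinuous
    { toFun := VfunCM j T
      map_add' := by intro f g; ext x; simp [VfunCM, sliceCM]
      map_smul' := by intro c f; ext x; simp [VfunCM, sliceCM] }
    ‖T‖ (VfunCM_norm_le j T)

@[simp] lemma Vclm_apply (j : Fin d) (T : C(II, ℝ) →L[ℝ] C(II, ℝ)) (f : C(Cube d, ℝ))
    (x : Cube d) : Vclm j T f x = T (sliceCM d j x f) (x j) := rfl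

lemma slice_update (j : Fin d) (x : Cube d) (t : II) (f : C(Cube d, ℝ)) :
    sliceCM d j (Function.update x j t) f = sliceCM d j x f := by
  ext s; simp [sliceCM, Function.update_idem]

lemma slice_Vclm (j : Fin d) (T : C(II, ℝ) →L[ℝ] C(II, ℝ)) (f : C(Cube d, ℝ)) (x : Cube d) :
    sliceCM d j x (Vclm j T f) = T (sliceCM d j x f) := by
  ext t
  show Vclm j T f (Function.update x j t) = _
  rw [Vclm_apply, slice_update, Function.update_self]

/-- `V j` as an algebra homomorphism -/
def Vhom (j : Fin d) :
    (C(II, ℝ) →L[ℝ] C(II, ℝ)) →ₐ[ℝ] (C(Cube d, ℝ) →L[ℝ] C(Cube d, ℝ)) where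
  toFun := Vclm j
  map_one' := by
    ext f x
    simp [sliceCM]
  map_mul' S T := by
    ext f x
    show Vclm j (S.comp T) f x = Vclm j S (Vclm j T f) x
    rw [Vclm_apply, Vclm_apply, slice_Vclm]
    rfl
  map_zero' := by ext f x; simp
  map_add' S T := by ext f x; simp
  commutes' r := by
    ext f x
    simp [Algebra.algebraMap_eq_smul_one, sliceCM]

lemma Vhom_norm_le (j : Fin d) (T : C(II, ℝ) →L[ℝ] C(II, ℝ)) :
    ‖Vhom (d := d) j T‖ ≤ 1 * ‖T‖ := by
  rw [one_mul]
  apply ContinuousLinearMap.opNorm_le_bound _ (norm_nonneg T)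
  exact VfunCM_norm_le j T

lemma Vhom_continuous (j : Fin d) : Continuous (Vhom (d := d) j) :=
  AddMonoidHomClass.continuous_of_bound (Vhom (d := d) j).toLinearMap 1 (Vhom_norm_le j)

/-- product functions on the cube -/
def prodCM (g : Fin d → C(II, ℝ)) : C(Cube d, ℝ) :=
  ⟨fun x => ∏ k, g k (x k), by
    apply continuous_finset_prod
    intro k _
    exact (g k).continuous.comp (continuous_apply k)⟩

@[simp] lemma prodCM_apply (g : Fin d → C(II, ℝ)) (x : Cube d) :
    prodCM g x = ∏ k, g k (x k) := rfl

lemma slice_prodCM (j : Fin d) (x : Cube d) (g : Fin d → C(II, ℝ)) :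
    sliceCM d j x (prodCM g) = (∏ k ∈ Finset.univ.erase j, g k (x k)) • g j := by
  ext t
  show ∏ k, g k (Function.update x j t k) = _
  rw [← Finset.mul_prod_erase Finset.univ _ (Finset.mem_univ j)]
  have h : ∀ k ∈ Finset.univ.erase j, g k (Function.update x j t k) = g k (x k) := by
    intro k hk
    rw [Function.update_of_ne (Finset.ne_of_mem_erase hk)]
  rw [Finset.prod_congr rfl h, Function.update_self]
  simp [mul_comm]

lemma Vclm_prodCM (j : Fin d) (T : C(II, ℝ) →L[ℝ] C(II, ℝ)) (g : Fin d → C(II, ℝ)) :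
    Vclm j T (prodCM g) = prodCM (Function.update g j (T (g j))) := by
  ext x
  rw [Vclm_apply, slice_prodCM, map_smul]
  show (∏ k ∈ Finset.univ.erase j, g k (x k)) * (T (g j)) (x j) = _
  rw [prodCM_apply, ← Finset.mul_prod_erase Finset.univ _ (Finset.mem_univ j),
    Function.update_self]
  have h : ∀ k ∈ Finset.univ.erase j,
      Function.update g j (T (g j)) k (x k) = g k (x k) := by
    intro k hk
    rw [Function.update_of_ne (Finset.ne_of_mem_erase hk)]
  rw [Finset.prod_congr rfl h, mul_comm]

lemma dense_span_prod :
    (Algebra.adjoin ℝ (Set.range (prodCM (d := d)))).topologicalClosure = ⊤ := by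
  apply ContinuousMap.subalgebra_topologicalClosure_eq_top_of_separatesPoints
  intro x y hxy
  obtain ⟨k, hk⟩ : ∃ k, x k ≠ y k := by
    by_contra h
    push_neg at h
    exact hxy (funext h)
  refine ⟨prodCM (Function.update (fun _ => 1) k ⟨Subtype.val, continuous_subtype_val⟩),
    ⟨_, Algebra.subset_adjoin ⟨_, rfl⟩, rfl⟩, ?_⟩
  simp only [prodCM_apply]
  have key : ∀ z : Cube d, ∏ l, Function.update (fun _ => (1 : C(II, ℝ))) k
      ⟨Subtype.val, continuous_subtype_val⟩ l (z l) = (z k : ℝ) := by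
    intro z
    rw [← Finset.mul_prod_erase Finset.univ _ (Finset.mem_univ k), Function.update_self]
    have h : ∀ l ∈ Finset.univ.erase k,
        Function.update (fun _ => (1 : C(II, ℝ))) k
          ⟨Subtype.val, continuous_subtype_val⟩ l (z l) = 1 := by
      intro l hl
      rw [Function.update_of_ne (Finset.ne_of_mem_erase hl)]
      rfl
    rw [Finset.prod_congr rfl h]
    simp
  rw [key x, key y]
  exact fun h => hk (Subtype.ext h)

lemma prodCM_one : prodCM (d := d) 1 = 1 := by ext x; simp
lemma prodCM_mul (g h : Fin d → C(II, ℝ)) : prodCM g * prodCM h = prodCM (g * h) := by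
  ext x
  simp [Finset.prod_mul_distrib]

/-- the product submonoid -/
def prodMonoid (d : ℕ) : Submonoid C(Cube d, ℝ) where
  carrier := Set.range (prodCM (d := d))
  one_mem' := ⟨1, prodCM_one.symm ▸ rfl⟩
  mul_mem' := by
    rintro _ _ ⟨g, rfl⟩ ⟨h, rfl⟩
    exact ⟨g * h, (prodCM_mul g h).symm⟩

lemma ext_of_prod (A B : C(Cube d, ℝ) →L[ℝ] C(Cube d, ℝ))
    (h : ∀ g, A (prodCM g) = B (prodCM g)) : A = B := by
  have hE : IsClosed {f : C(Cube d, ℝ) | A f = B f} :=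
    isClosed_eq A.continuous B.continuous
  have hmono : Submonoid.closure (Set.range (prodCM (d := d))) = prodMonoid d := by
    apply le_antisymm
    · exact Submonoid.closure_le.2 (le_refl _)
    · exact Submonoid.subset_closure
  have hspan : (Algebra.adjoin ℝ (Set.range (prodCM (d := d)))).toSubmodule
      ≤ (LinearMap.eqLocus (A : C(Cube d, ℝ) →ₗ[ℝ] C(Cube d, ℝ)) B) := by
    rw [Algebra.adjoin_eq_span, hmono]
    apply Submodule.span_le.2
    rintro _ ⟨g, rfl⟩
    exact h g
  have hsub : (Algebra.adjoin ℝ (Set.range (prodCM (d := d))) : Set C(Cube d, ℝ))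
      ⊆ {f | A f = B f} := hspan
  have hcl : (closure (Algebra.adjoin ℝ (Set.range (prodCM (d := d))) :
      Set C(Cube d, ℝ))) ⊆ {f | A f = B f} := hE.closure_subset_iff.2 hsub
  have hdense := dense_span_prod (d := d)
  have : (closure (Algebra.adjoin ℝ (Set.range (prodCM (d := d))) :
      Set C(Cube d, ℝ))) = Set.univ := by
    have := congrArg (fun S : Subalgebra ℝ C(Cube d, ℝ) => (S : Set C(Cube d, ℝ))) hdense
    simpa [Subalgebra.topologicalClosure] using this
  apply ContinuousLinearMap.ext
  intro f
  exact hcl (this ▸ Set.mem_univ f)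

lemma Vclm_comm {i j : Fin d} (hij : i ≠ j) (S T : C(II, ℝ) →L[ℝ] C(II, ℝ)) :
    (Vclm i S).comp (Vclm j T) = (Vclm j T).comp (Vclm i S) := by
  apply ext_of_prod
  intro g
  show Vclm i S (Vclm j T (prodCM g)) = Vclm j T (Vclm i S (prodCM g))
  rw [Vclm_prodCM, Vclm_prodCM, Vclm_prodCM, Vclm_prodCM,
    Function.update_of_ne hij, Function.update_of_ne hij.symm,
    Function.update_comm hij.symm]

/-- Lemma 1.3.2: every bounded operator `T` on `C([0,1])` extends uniquely to an
operator `𝒯^j = V_j(T)` on `C([0,1]^d)` acting in the `j`-th variable; each `V_j` is a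
continuous Banach-algebra homomorphism, and `V_i(S) ∘ V_j(T) = V_j(T) ∘ V_i(S)` for
`i ≠ j`. -/
theorem stmt_15 (d : ℕ) (hd : 0 < d) :
    ∃ V : Fin d →
        ((C(Set.Icc (0 : ℝ) 1, ℝ) →L[ℝ] C(Set.Icc (0 : ℝ) 1, ℝ)) →ₐ[ℝ]
          (C((Fin d → Set.Icc (0 : ℝ) 1), ℝ) →L[ℝ] C((Fin d → Set.Icc (0 : ℝ) 1), ℝ))),
      (∀ j, Continuous (V j)) ∧
      (∀ j T, ActsInCoordC d j T (V j T)) ∧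
      (∀ j T S', ActsInCoordC d j T S' → S' = V j T) ∧
      (∀ i j, i ≠ j → ∀ S T, (V i S) * (V j T) = (V j T) * (V i S)) := by
  refine ⟨fun j => Vhom j, fun j => Vhom_continuous j, fun j T f x => rfl, ?_, ?_⟩
  · intro j T S' hS'
    apply ContinuousLinearMap.ext
    intro f
    ext x
    exact hS' f x
  · intro i j hij S T
    exact Vclm_comm hij S T

end
end

section
/- Let d ∈ ℕ, β ∈ (ℝ₊)^d with min_j β_j = 1, l ∈ ℕ^d, and let N = card{j : β_j = 1}. For r ∈ ℕ, the total number of tensor-grid interpolation points ∑_{κ ∈ ℤ₊^d, (κ,β) ≤ r} (∏_j l_j) · 2^{(κ, e)} is at most c · 2^r · r^{N-1} for a constant c = c(d, l, β) > 0 independent of r, where e = (1,...,1). Consequently, for all sufficiently large n there exists r ∈ ℕ with c·2^r·r^{N-1} ≤ n < c·2^{r+1}·(r+1)^{N-1}. -/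
open scoped Classical

private lemma aux_split {d : ℕ} (j0 : Fin d) {M : Type*} [AddCommMonoid M] (g : Fin d → M) :
    ∑ j, g j = g j0 + ∑ j : {j : Fin d // j ≠ j0}, g j.1 := by
  rw [← Finset.add_sum_erase _ g (Finset.mem_univ j0)]
  congr 1
  exact Finset.sum_subtype _ (fun x => by simp [Finset.mem_erase]) _

private lemma aux_rpow_sum {ι : Type*} (s : Finset ι) (a : ι → ℝ) :
    (2:ℝ) ^ (∑ j ∈ s, a j) = ∏ j ∈ s, (2:ℝ) ^ (a j) := by
  classical
  induction s using Finset.cons_induction with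
  | empty => simp
  | cons i s hi ih =>
      rw [Finset.sum_cons, Finset.prod_cons, Real.rpow_add two_pos, ih]

private lemma aux_geom (t : ℝ) (n : ℕ) :
    ∑ m ∈ Finset.range n, (if (m : ℝ) ≤ t then (2:ℝ) ^ m else 0) ≤ 2 * (2:ℝ) ^ t := by
  rcases lt_or_ge t 0 with ht | ht
  · have h0 : ∀ m ∈ Finset.range n, (if (m:ℝ) ≤ t then (2:ℝ)^m else 0) = 0 := by
      intro m _
      rw [if_neg]
      push_neg
      exact lt_of_lt_of_le ht (Nat.cast_nonneg m)
    rw [Finset.sum_congr rfl h0, Finset.sum_const, smul_zero]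
    positivity
  · set M := ⌊t⌋₊ with hM
    have hMt : (M : ℝ) ≤ t := Nat.floor_le ht
    calc ∑ m ∈ Finset.range n, (if (m:ℝ) ≤ t then (2:ℝ)^m else 0)
        ≤ ∑ m ∈ Finset.range n, (if m ≤ M then (2:ℝ)^m else 0) := by
          apply Finset.sum_le_sum
          intro m _
          split_ifs with h1 h2
          · exact le_refl _
          · exact absurd (Nat.le_floor h1) h2
          · positivity
          · exact le_refl _
      _ = ∑ m ∈ (Finset.range n).filter (· ≤ M), (2:ℝ)^m := (Finset.sum_filter _ _).symm
      _ ≤ ∑ m ∈ Finset.range (M+1), (2:ℝ)^m := by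
          apply Finset.sum_le_sum_of_subset_of_nonneg
          · intro x hx
            simp only [Finset.mem_filter, Finset.mem_range] at hx ⊢
            omega
          · intros
            positivity
      _ = 2^(M+1) - 1 := by
          rw [geom_sum_eq (by norm_num)]
          norm_num
      _ ≤ 2 * (2:ℝ) ^ t := by
          have h1 : (2:ℝ)^(M+1) = 2 * (2:ℝ)^(M:ℝ) := by
            rw [Real.rpow_natCast, pow_succ, mul_comm]
          have h2 : (2:ℝ)^(M:ℝ) ≤ (2:ℝ)^t :=
            Real.rpow_le_rpow_of_exponent_le one_le_two hMt
          nlinarith [Real.rpow_pos_of_pos two_pos t]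

private lemma aux_geom_sum_le {x : ℝ} (h0 : 0 ≤ x) (h1 : x < 1) (n : ℕ) :
    ∑ m ∈ Finset.range n, x ^ m ≤ (1 - x)⁻¹ := by
  have hx : x ≠ 1 := ne_of_lt h1
  have hpos : (0:ℝ) < 1 - x := by linarith
  rw [geom_sum_eq hx, ← neg_div_neg_eq]
  have h2 : -(x^n - 1) = 1 - x^n := by ring
  have h3 : -(x - 1) = 1 - x := by ring
  rw [h2, h3, inv_eq_one_div]
  gcongr
  nlinarith [pow_nonneg h0 n]

/-- Counting the sparse-grid interpolation points: with `min_j β_j = 1` and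
`N = card{j : β_j = 1}`, the number `∑_{(κ,β) ≤ r} (∏_j l_j)·2^{(κ,e)}` of points is at
most `c·2^r·r^{N-1}`, and consequently every sufficiently large `n` lies between
consecutive such bounds. -/
theorem stmt_19 (d : ℕ) (hd : 0 < d) (β : Fin d → ℝ)
    (hβ : ∀ j, 1 ≤ β j) (hβ1 : ∃ j, β j = 1) (l : Fin d → ℕ) (hl : ∀ j, 1 ≤ l j) :
    ∃ c : ℝ, 0 < c ∧
      (∀ r : ℕ, 1 ≤ r →
        (∑' κ : Fin d → ℕ,
            (if (∑ j, (κ j : ℝ) * β j) ≤ (r : ℝ) then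
              ((∏ j, l j : ℕ) : ℝ) * 2 ^ (∑ j, κ j) else 0)) ≤
          c * (2 : ℝ) ^ r *
            (r : ℝ) ^ ((((Finset.univ.filter fun j => β j = 1).card : ℝ)) - 1)) ∧
      (∃ n₀ : ℕ, ∀ n : ℕ, n₀ ≤ n → ∃ r : ℕ, 1 ≤ r ∧
        c * (2 : ℝ) ^ r *
            (r : ℝ) ^ ((((Finset.univ.filter fun j => β j = 1).card : ℝ)) - 1) ≤ (n : ℝ) ∧
        (n : ℝ) < c * (2 : ℝ) ^ (r + 1) *
            ((r : ℝ) + 1) ^ ((((Finset.univ.filter fun j => β j = 1).card : ℝ)) - 1)) := by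
  classical
  obtain ⟨j0, hj0⟩ := hβ1
  set N : ℕ := (Finset.univ.filter fun j => β j = 1).card with hN
  have hN1 : 1 ≤ N := Finset.card_pos.mpr ⟨j0, by simp [hj0]⟩
  have hNc : ((N - 1 : ℕ) : ℝ) = (N : ℝ) - 1 := by
    push_cast [hN1]
    ring
  set L : ℕ := ∏ j, l j with hL
  have hL1 : 1 ≤ L := Finset.one_le_prod' (fun j _ => hl j)
  have hLpos : (0:ℝ) < L := by exact_mod_cast hL1
  set θ : Fin d → ℝ := fun j => (2:ℝ) ^ (1 - β j) with hθ
  have hθpos : ∀ j, 0 < θ j := fun j => Real.rpow_pos_of_pos two_pos _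
  have hθlt : ∀ j, β j ≠ 1 → θ j < 1 := by
    intro j h
    have h2 : 1 < β j := lt_of_le_of_ne (hβ j) (Ne.symm h)
    exact Real.rpow_lt_one_of_one_lt_of_neg one_lt_two (by linarith)
  set D : {j : Fin d // j ≠ j0} → ℝ := fun j => if β j.1 = 1 then 1 else (1 - θ j.1)⁻¹ with hD
  have hD1 : ∀ j, 1 ≤ D j := by
    intro j
    simp only [hD]
    split_ifs with h
    · exact le_refl 1
    · have h1 : 0 < 1 - θ j.1 := by have := hθlt j.1 h; linarith
      have h2 : 1 - θ j.1 ≤ 1 := by have := hθpos j.1; linarith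
      exact one_le_inv_iff₀.mpr ⟨h1, h2⟩
  set CB : ℝ := ∏ j : {j : Fin d // j ≠ j0}, D j with hCB
  have hCB1 : 1 ≤ CB := by
    rw [hCB]
    calc (1:ℝ) = ∏ _j : {j : Fin d // j ≠ j0}, (1:ℝ) := Finset.prod_const_one.symm
      _ ≤ ∏ j : {j : Fin d // j ≠ j0}, D j :=
        Finset.prod_le_prod (fun _ _ => zero_le_one) (fun j _ => hD1 j)
  set c : ℝ := (L : ℝ) * 2 * 2^(N-1) * CB with hc
  have hcpos : 0 < c := by positivity
  refine ⟨c, hcpos, ?_, ?_⟩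
  · intro r hr
    have hrpos : (0:ℝ) < r := by exact_mod_cast hr
    set e := Equiv.piSplitAt j0 (fun _ : Fin d => ℕ) with he
    set F : (Fin d → ℕ) → ℝ := fun κ =>
      if (∑ j, (κ j : ℝ) * β j) ≤ (r : ℝ) then (L : ℝ) * 2 ^ (∑ j, κ j) else 0 with hF
    have hsupp : ∀ κ : Fin d → ℕ,
        κ ∉ Fintype.piFinset (fun _ : Fin d => Finset.range (r+1)) → F κ = 0 := by
      intro κ hκ
      simp only [Fintype.mem_piFinset, Finset.mem_range, not_forall, not_lt] at hκ
      obtain ⟨j1, hj1⟩ := hκ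
      simp only [hF]
      rw [if_neg]
      push_neg
      calc (r:ℝ) < (κ j1 : ℝ) := by exact_mod_cast Nat.lt_of_lt_of_le (Nat.lt_succ_self r) hj1
        _ ≤ (κ j1 : ℝ) * β j1 := le_mul_of_one_le_right (Nat.cast_nonneg _) (hβ j1)
        _ ≤ ∑ j, (κ j : ℝ) * β j := Finset.single_le_sum
            (f := fun j => (κ j : ℝ) * β j)
            (fun j _ => mul_nonneg (Nat.cast_nonneg _) (le_trans zero_le_one (hβ j)))
            (Finset.mem_univ j1)
    rw [tsum_eq_sum hsupp]
    have hequiv : ∑ κ ∈ Fintype.piFinset (fun _ : Fin d => Finset.range (r+1)), F κ =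
        ∑ p ∈ (Finset.range (r+1)) ×ˢ
            (Fintype.piFinset (fun _ : {j : Fin d // j ≠ j0} => Finset.range (r+1))),
          F (e.symm p) := by
      apply Finset.sum_equiv e
      · intro κ
        simp only [Fintype.mem_piFinset, Finset.mem_product, Finset.mem_range, he,
          Equiv.piSplitAt_apply]
        constructor
        · intro h
          exact ⟨h j0, fun j => h j.1⟩
        · rintro ⟨h1, h2⟩ j
          by_cases hj : j = j0
          · subst hj; exact h1
          · exact h2 ⟨j, hj⟩
      · intro κ _
        rw [Equiv.symm_apply_apply]
    rw [hequiv, Finset.sum_product_right]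
    -- inner bound
    have inner : ∀ κ' : {j : Fin d // j ≠ j0} → ℕ,
        ∑ m ∈ Finset.range (r+1), F (e.symm (m, κ')) ≤
          2 * (L:ℝ) * (2:ℝ) ^ (r:ℝ) * ∏ j : {j : Fin d // j ≠ j0}, θ j.1 ^ κ' j := by
      intro κ'
      set Sb : ℝ := ∑ j : {j : Fin d // j ≠ j0}, (κ' j : ℝ) * β j.1 with hSb
      set S1 : ℕ := ∑ j : {j : Fin d // j ≠ j0}, κ' j with hS1
      have hA : ∀ m : ℕ, (∑ j, ((e.symm (m, κ')) j : ℝ) * β j) = (m:ℝ) + Sb := by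
        intro m
        rw [aux_split j0 (fun j => ((e.symm (m, κ')) j : ℝ) * β j)]
        congr 1
        · simp [he, Equiv.piSplitAt_symm_apply, hj0]
        · apply Finset.sum_congr rfl
          intro j _
          simp [he, Equiv.piSplitAt_symm_apply, j.2]
      have hB : ∀ m : ℕ, (∑ j, (e.symm (m, κ')) j) = m + S1 := by
        intro m
        rw [aux_split j0 (fun j => (e.symm (m, κ')) j)]
        congr 1
        · simp [he, Equiv.piSplitAt_symm_apply]
        · apply Finset.sum_congr rfl
          intro j _
          simp [he, Equiv.piSplitAt_symm_apply, j.2]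
      have hval : ∀ m : ℕ, F (e.symm (m, κ')) =
          if (m:ℝ) ≤ (r:ℝ) - Sb then ((L:ℝ) * 2 ^ S1) * 2 ^ m else 0 := by
        intro m
        simp only [hF]
        rw [hA m, hB m]
        by_cases hcnd : (m:ℝ) + Sb ≤ (r:ℝ)
        · rw [if_pos hcnd, if_pos (by linarith), pow_add]
          ring
        · rw [if_neg hcnd, if_neg (by intro h; exact hcnd (by linarith))]
      have key : (2:ℝ) ^ S1 * (2:ℝ) ^ ((r:ℝ) - Sb) =
          (2:ℝ) ^ (r:ℝ) * ∏ j : {j : Fin d // j ≠ j0}, θ j.1 ^ κ' j := by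
        rw [← Real.rpow_natCast 2 S1, ← Real.rpow_add two_pos]
        have e1 : (S1:ℝ) + ((r:ℝ) - Sb) =
            (r:ℝ) + ∑ j : {j : Fin d // j ≠ j0}, ((κ' j : ℝ) * (1 - β j.1)) := by
          have e2 : ∑ j : {j : Fin d // j ≠ j0}, ((κ' j : ℝ) * (1 - β j.1)) =
              (∑ j : {j : Fin d // j ≠ j0}, (κ' j : ℝ)) - Sb := by
            rw [hSb, ← Finset.sum_sub_distrib]
            apply Finset.sum_congr rfl
            intro j _
            ring
          have e3 : (S1:ℝ) = ∑ j : {j : Fin d // j ≠ j0}, (κ' j : ℝ) := by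
            rw [hS1]
            push_cast
            rfl
          rw [e2, e3]
          ring
        rw [e1, Real.rpow_add two_pos, aux_rpow_sum]
        congr 1
        apply Finset.prod_congr rfl
        intro j _
        simp only [hθ]
        rw [mul_comm, Real.rpow_mul (by norm_num : (0:ℝ) ≤ 2), Real.rpow_natCast]
      calc ∑ m ∈ Finset.range (r+1), F (e.symm (m, κ'))
          = ((L:ℝ) * 2 ^ S1) *
              ∑ m ∈ Finset.range (r+1), (if (m:ℝ) ≤ (r:ℝ) - Sb then (2:ℝ) ^ m else 0) := by
            rw [Finset.mul_sum]
            apply Finset.sum_congr rfl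
            intro m _
            rw [hval m, mul_ite, mul_zero]
        _ ≤ ((L:ℝ) * 2 ^ S1) * (2 * (2:ℝ) ^ ((r:ℝ) - Sb)) := by
            apply mul_le_mul_of_nonneg_left (aux_geom _ _) (by positivity)
        _ = 2 * (L:ℝ) * ((2:ℝ) ^ S1 * (2:ℝ) ^ ((r:ℝ) - Sb)) := by ring
        _ = 2 * (L:ℝ) * (2:ℝ) ^ (r:ℝ) * ∏ j : {j : Fin d // j ≠ j0}, θ j.1 ^ κ' j := by
            rw [key]
            ring
    -- assemble
    have coord : ∀ j : {j : Fin d // j ≠ j0},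
        ∑ k ∈ Finset.range (r+1), θ j.1 ^ k ≤
          (if β j.1 = 1 then 2*(r:ℝ) else (1 - θ j.1)⁻¹) := by
      intro j
      split_ifs with h
      · have hθ1 : θ j.1 = 1 := by simp [hθ, h]
        rw [hθ1]
        simp only [one_pow, Finset.sum_const, Finset.card_range, nsmul_eq_mul, mul_one]
        push_cast
        have hr1 : (1:ℝ) ≤ r := by exact_mod_cast hr
        linarith
      · exact aux_geom_sum_le (le_of_lt (hθpos j.1)) (hθlt j.1 h) _
    have hcard : (Finset.univ.filter fun j : {j : Fin d // j ≠ j0} => β j.1 = 1).card = N - 1 := by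
      have hb : (Finset.univ.filter fun j : {j : Fin d // j ≠ j0} => β j.1 = 1).card =
          ((Finset.univ.filter fun j : Fin d => β j = 1).erase j0).card := by
        apply Finset.card_bij (fun (j : {j : Fin d // j ≠ j0}) _ => j.1)
        · intro a ha
          simp only [Finset.mem_filter, Finset.mem_univ, true_and] at ha
          simp only [Finset.mem_erase, Finset.mem_filter, Finset.mem_univ, true_and]
          exact ⟨a.2, ha⟩
        · intro a _ b _ hab
          exact Subtype.ext hab
        · intro b hb
          simp only [Finset.mem_erase, Finset.mem_filter, Finset.mem_univ, true_and] at hb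
          exact ⟨⟨b, hb.1⟩, by simp [hb.2], rfl⟩
      rw [hb, Finset.card_erase_of_mem (by simp [hj0])]
    have prodid : ∏ j : {j : Fin d // j ≠ j0},
        (if β j.1 = 1 then 2*(r:ℝ) else (1 - θ j.1)⁻¹) = (2*(r:ℝ))^(N-1) * CB := by
      rw [Finset.prod_ite, Finset.prod_const, hcard]
      congr 1
      rw [hCB]
      simp only [hD]
      rw [Finset.prod_ite, Finset.prod_const_one, one_mul]
    calc ∑ κ' ∈ Fintype.piFinset (fun _ : {j : Fin d // j ≠ j0} => Finset.range (r+1)),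
          ∑ m ∈ Finset.range (r+1), F (e.symm (m, κ'))
        ≤ ∑ κ' ∈ Fintype.piFinset (fun _ : {j : Fin d // j ≠ j0} => Finset.range (r+1)),
            (2 * (L:ℝ) * (2:ℝ) ^ (r:ℝ) * ∏ j : {j : Fin d // j ≠ j0}, θ j.1 ^ κ' j) :=
          Finset.sum_le_sum (fun κ' _ => inner κ')
      _ = 2 * (L:ℝ) * (2:ℝ) ^ (r:ℝ) *
            ∑ κ' ∈ Fintype.piFinset (fun _ : {j : Fin d // j ≠ j0} => Finset.range (r+1)),
              ∏ j : {j : Fin d // j ≠ j0}, θ j.1 ^ κ' j := by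
          rw [Finset.mul_sum]
      _ = 2 * (L:ℝ) * (2:ℝ) ^ (r:ℝ) *
            ∏ j : {j : Fin d // j ≠ j0}, ∑ k ∈ Finset.range (r+1), θ j.1 ^ k := by
          rw [Finset.prod_univ_sum]
      _ ≤ 2 * (L:ℝ) * (2:ℝ) ^ (r:ℝ) *
            ∏ j : {j : Fin d // j ≠ j0}, (if β j.1 = 1 then 2*(r:ℝ) else (1 - θ j.1)⁻¹) := by
          apply mul_le_mul_of_nonneg_left
          · apply Finset.prod_le_prod
            · intro j _
              apply Finset.sum_nonneg
              intro k _
              positivity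
            · exact fun j _ => coord j
          · positivity
      _ = c * (2:ℝ) ^ r * (r:ℝ) ^ ((N:ℝ) - 1) := by
          rw [prodid]
          have h2r : (2:ℝ) ^ (r:ℝ) = (2:ℝ) ^ r := Real.rpow_natCast 2 r
          have hrN : (r:ℝ) ^ ((N:ℝ) - 1) = (r:ℝ) ^ (N-1 : ℕ) := by
            rw [← hNc, Real.rpow_natCast]
          rw [h2r, hrN, hc, mul_pow]
          ring
  · -- part 2
    set g : ℕ → ℝ := fun r => c * (2:ℝ)^r * (r:ℝ) ^ ((N:ℝ) - 1) with hg
    have hg1 : ∀ r : ℕ, 1 ≤ r → 0 < g r := by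
      intro r hr
      have : (0:ℝ) < (r:ℝ) := by exact_mod_cast hr
      simp only [hg]
      positivity
    refine ⟨max 1 ⌈g 1⌉₊, ?_⟩
    intro n hn
    have hn1 : g 1 ≤ (n:ℝ) := by
      calc g 1 ≤ (⌈g 1⌉₊ : ℝ) := Nat.le_ceil _
        _ ≤ (n : ℝ) := by exact_mod_cast le_trans (le_max_right _ _) hn
    have hex : ∃ m : ℕ, (n:ℝ) < g (m+1) := by
      obtain ⟨m, hm⟩ := pow_unbounded_of_one_lt ((n:ℝ)/c) (one_lt_two (α := ℝ))
      refine ⟨m, ?_⟩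
      have h2 : (n:ℝ) < c * 2^(m+1) := by
        rw [div_lt_iff₀ hcpos] at hm
        have hp : (0:ℝ) < 2^m := by positivity
        rw [pow_succ]
        nlinarith
      have h3 : (1:ℝ) ≤ ((m+1:ℕ):ℝ) ^ ((N:ℝ) - 1) := by
        apply Real.one_le_rpow
        · exact_mod_cast Nat.one_le_iff_ne_zero.mpr (by omega)
        · have : (1:ℝ) ≤ (N:ℝ) := by exact_mod_cast hN1
          linarith
      have h4 : (0:ℝ) < c * 2^(m+1) := by positivity
      simp only [hg]
      nlinarith
    set r : ℕ := Nat.find hex with hrdef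
    have hPr : (n:ℝ) < g (r+1) := Nat.find_spec hex
    have hr1 : 1 ≤ r := by
      by_contra h
      push_neg at h
      interval_cases r
      · exact absurd hPr (by simpa using not_lt.mpr hn1)
    have hgr : g r ≤ (n:ℝ) := by
      have := Nat.find_min hex (show r - 1 < r by omega)
      push_neg at this
      have h2 : r - 1 + 1 = r := by omega
      rwa [h2] at this
    refine ⟨r, hr1, hgr, ?_⟩
    have := hPr
    simp only [hg] at this
    push_cast at this ⊢
    convert this using 3 <;> push_cast <;> ring
end
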